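/- arXiv:1602.05534 — 6 statements merged into one kernel-verified Lean document; each statement's English description precedes it below -/
import Mathlib

section
/- Let R = ℂ[x₀,…,x₅]/(x₀²,…,x₅²), graded by total degree, let S¹ ⊂ R denote the image of the space of homogeneous linear forms, and let ζ ≠ ζ′ be complex numbers with ζ³ = ζ′³ = −1. Then the degree-2 graded component of R is spanned by the products ℓ·m, where ℓ ranges over images of linear forms and m ranges over the six elements x₀ − ζx₁, x₂ − ζx₃, x₄ − ζx₅, x₀ − ζ′x₁, x₂ − ζ′x₃, x₄ − ζ′x₅; that is, S¹·⟨x₀ − ζx₁, x₂ − ζx₃, x₄ − ζx₅⟩ + S¹·⟨x₀ − ζ′x₁, x₂ − ζ′x₃, x₄ − ζ′x₅⟩ equals the full degree-2 part of R. -/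
open MvPolynomial

noncomputable section

/-- The Jacobian ideal of the Fermat cubic fourfold `x₀³ + ⋯ + x₅³`,
generated by the squares of the six variables. -/
def fermatJacIdeal : Ideal (MvPolynomial (Fin 6) ℂ) :=
  Ideal.span (Set.range fun i : Fin 6 => (X i : MvPolynomial (Fin 6) ℂ) ^ 2)

/-- The Jacobian ring `R = ℂ[x₀,…,x₅]/(x₀²,…,x₅²)` of the Fermat cubic fourfold. -/
abbrev FermatJacRing := MvPolynomial (Fin 6) ℂ ⧸ fermatJacIdeal

/-- The quotient map `ℂ[x₀,…,x₅] → R`. -/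
def fermatπ : MvPolynomial (Fin 6) ℂ →ₐ[ℂ] FermatJacRing :=
  Ideal.Quotient.mkₐ ℂ fermatJacIdeal

/-- The degree-`d` graded component of `R`: the image of the space of
homogeneous polynomials of degree `d` under the quotient map. -/
def fermatDeg (d : ℕ) : Submodule ℂ FermatJacRing :=
  (homogeneousSubmodule (Fin 6) ℂ d).map fermatπ.toLinearMap

lemma finsupp_deg_two {s : Fin 6 →₀ ℕ} (h : s.degree = 2) :
    ∃ i j : Fin 6, (monomial s (1:ℂ)) = X i * X j := by
  have hc : Multiset.card s.toMultiset = 2 := by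
    rw [Finsupp.card_toMultiset]
    exact h
  obtain ⟨i, j, hij⟩ := Multiset.card_eq_two.mp hc
  refine ⟨i, j, ?_⟩
  have hs : s = Finsupp.single i 1 + Finsupp.single j 1 := by
    have := congrArg Multiset.toFinsupp hij
    rw [Finsupp.toMultiset_toFinsupp] at this
    rw [this, show ({i, j} : Multiset (Fin 6)) = {i} + {j} by rfl,
      Multiset.toFinsupp_add, Multiset.toFinsupp_singleton, Multiset.toFinsupp_singleton]
  rw [hs, X, X, monomial_mul, one_mul]

lemma solve2 {M : Type*} [AddCommGroup M] [Module ℂ M] (N : Submodule ℂ M)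
    {u v : M} {ζ ζ' : ℂ} (hne : ζ ≠ ζ') (ha : u - ζ • v ∈ N) (hb : u - ζ' • v ∈ N) :
    u ∈ N ∧ v ∈ N := by
  have h : ζ' - ζ ≠ 0 := sub_ne_zero.2 (Ne.symm hne)
  constructor
  · have : u = (ζ'-ζ)⁻¹ • (ζ' • (u - ζ•v) - ζ • (u - ζ'•v)) := by
      match_scalars <;> field_simp <;> ring
    rw [this]
    exact N.smul_mem _ (sub_mem (N.smul_mem _ ha) (N.smul_mem _ hb))
  · have : v = (ζ'-ζ)⁻¹ • ((u - ζ•v) - (u - ζ'•v)) := by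
      match_scalars <;> field_simp <;> ring
    rw [this]
    exact N.smul_mem _ (sub_mem ha hb)

lemma fermat_hprod (c : ℂ) (a b j : Fin 6) :
    fermatπ (X j) * fermatπ (X a - C c * X b)
      = fermatπ (X a * X j) - c • fermatπ (X b * X j) := by
  rw [← map_mul]
  have h : (X j : MvPolynomial (Fin 6) ℂ) * (X a - C c * X b)
      = X a * X j - c • (X b * X j) := by
    rw [smul_eq_C_mul]; ring
  rw [h, map_sub, map_smul]

/-- Let `R = ℂ[x₀,…,x₅]/(x₀²,…,x₅²)`, let `S¹` be the image of the space of
linear forms, and `ζ ≠ ζ'` with `ζ³ = ζ'³ = -1`.  Then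
`S¹·⟨x₀-ζx₁, x₂-ζx₃, x₄-ζx₅⟩ + S¹·⟨x₀-ζ'x₁, x₂-ζ'x₃, x₄-ζ'x₅⟩` equals the
full degree-2 component of `R`. -/
theorem fermat_deg_two_generated
    (ζ ζ' : ℂ) (hζ : ζ ^ 3 = -1) (hζ' : ζ' ^ 3 = -1) (hne : ζ ≠ ζ') :
    Submodule.span ℂ {x : FermatJacRing | ∃ ℓ ∈ fermatDeg 1,
        ∃ m ∈ ({fermatπ (X 0 - C ζ * X 1), fermatπ (X 2 - C ζ * X 3),
            fermatπ (X 4 - C ζ * X 5)} : Set FermatJacRing), x = ℓ * m}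
      ⊔ Submodule.span ℂ {x : FermatJacRing | ∃ ℓ ∈ fermatDeg 1,
        ∃ m ∈ ({fermatπ (X 0 - C ζ' * X 1), fermatπ (X 2 - C ζ' * X 3),
            fermatπ (X 4 - C ζ' * X 5)} : Set FermatJacRing), x = ℓ * m}
      = fermatDeg 2 := by
  set S1 : Set FermatJacRing := {x : FermatJacRing | ∃ ℓ ∈ fermatDeg 1,
        ∃ m ∈ ({fermatπ (X 0 - C ζ * X 1), fermatπ (X 2 - C ζ * X 3),
            fermatπ (X 4 - C ζ * X 5)} : Set FermatJacRing), x = ℓ * m} with hS1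
  set S2 : Set FermatJacRing := {x : FermatJacRing | ∃ ℓ ∈ fermatDeg 1,
        ∃ m ∈ ({fermatπ (X 0 - C ζ' * X 1), fermatπ (X 2 - C ζ' * X 3),
            fermatπ (X 4 - C ζ' * X 5)} : Set FermatJacRing), x = ℓ * m} with hS2
  set M : Submodule ℂ FermatJacRing := Submodule.span ℂ S1 ⊔ Submodule.span ℂ S2 with hM
  have hXdeg : ∀ i : Fin 6, fermatπ (X i) ∈ fermatDeg 1 := fun i =>
    ⟨X i, isHomogeneous_X ℂ i, rfl⟩
  have hlin : ∀ (c : ℂ) (a b : Fin 6),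
      (X a - C c * X b : MvPolynomial (Fin 6) ℂ).IsHomogeneous 1 := fun c a b =>
    (isHomogeneous_X ℂ a).sub ((isHomogeneous_C _ c).mul (isHomogeneous_X ℂ b))
  -- easy inclusion
  apply le_antisymm
  · apply sup_le <;> rw [Submodule.span_le] <;>
    · rintro x ⟨ℓ, ⟨p, hp, rfl⟩, m, hm, rfl⟩
      rcases hm with rfl | rfl | rfl <;>
      exact ⟨p * _, MvPolynomial.IsHomogeneous.mul hp (hlin _ _ _),
        show fermatπ (p * _) = _ from map_mul fermatπ _ _⟩
  -- hard inclusion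
  · have hgen1 : ∀ (j : Fin 6) (m : FermatJacRing),
        m ∈ ({fermatπ (X 0 - C ζ * X 1), fermatπ (X 2 - C ζ * X 3),
            fermatπ (X 4 - C ζ * X 5)} : Set FermatJacRing) →
        fermatπ (X j) * m ∈ M := fun j m hm =>
      Submodule.mem_sup_left (Submodule.subset_span ⟨fermatπ (X j), hXdeg j, m, hm, rfl⟩)
    have hgen2 : ∀ (j : Fin 6) (m : FermatJacRing),
        m ∈ ({fermatπ (X 0 - C ζ' * X 1), fermatπ (X 2 - C ζ' * X 3),
            fermatπ (X 4 - C ζ' * X 5)} : Set FermatJacRing) →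
        fermatπ (X j) * m ∈ M := fun j m hm =>
      Submodule.mem_sup_right (Submodule.subset_span ⟨fermatπ (X j), hXdeg j, m, hm, rfl⟩)
    have key : ∀ (a b j : Fin 6),
        fermatπ (X a - C ζ * X b) ∈ ({fermatπ (X 0 - C ζ * X 1), fermatπ (X 2 - C ζ * X 3),
            fermatπ (X 4 - C ζ * X 5)} : Set FermatJacRing) →
        fermatπ (X a - C ζ' * X b) ∈ ({fermatπ (X 0 - C ζ' * X 1), fermatπ (X 2 - C ζ' * X 3),
            fermatπ (X 4 - C ζ' * X 5)} : Set FermatJacRing) →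
        fermatπ (X a * X j) ∈ M ∧ fermatπ (X b * X j) ∈ M := by
      intro a b j h1 h2
      refine solve2 M hne ?_ ?_
      · have := hgen1 j _ h1; rwa [fermat_hprod] at this
      · have := hgen2 j _ h2; rwa [fermat_hprod] at this
    have hmono : ∀ i j : Fin 6, fermatπ (X i * X j) ∈ M := by
      intro i j
      fin_cases i
      · exact (key 0 1 j (Set.mem_insert _ _) (Set.mem_insert _ _)).1
      · exact (key 0 1 j (Set.mem_insert _ _) (Set.mem_insert _ _)).2
      · exact (key 2 3 j (Set.mem_insert_of_mem _ (Set.mem_insert _ _))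
          (Set.mem_insert_of_mem _ (Set.mem_insert _ _))).1
      · exact (key 2 3 j (Set.mem_insert_of_mem _ (Set.mem_insert _ _))
          (Set.mem_insert_of_mem _ (Set.mem_insert _ _))).2
      · exact (key 4 5 j (Set.mem_insert_of_mem _ (Set.mem_insert_of_mem _ rfl))
          (Set.mem_insert_of_mem _ (Set.mem_insert_of_mem _ rfl))).1
      · exact (key 4 5 j (Set.mem_insert_of_mem _ (Set.mem_insert_of_mem _ rfl))
          (Set.mem_insert_of_mem _ (Set.mem_insert_of_mem _ rfl))).2
    rintro x ⟨p, hp, rfl⟩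
    have hp' : p.IsHomogeneous 2 := hp
    have hrep : fermatπ.toLinearMap p
        = ∑ v ∈ p.support, fermatπ (monomial v (coeff v p)) := by
      conv_lhs => rw [p.as_sum]
      exact map_sum _ _ _
    rw [hrep]
    refine Submodule.sum_mem _ fun v hv => ?_
    have hdeg : v.degree = 2 := by
      have := hp' (mem_support_iff.1 hv)
      rw [Finsupp.degree_eq_weight_one]
      exact this
    obtain ⟨i, j, hij⟩ := finsupp_deg_two hdeg
    have hm : monomial v (coeff v p) = coeff v p • (X i * X j) := by
      rw [← hij, smul_monomial, smul_eq_mul, mul_one]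
    rw [hm, map_smul]
    exact Submodule.smul_mem _ _ (hmono i j)
end
end

section
/- Let R = ℂ[x₀,…,x₅]/(x₀²,…,x₅²) and let ζ be a complex number with ζ³ = −1. Then the space of degree-3 elements q of R satisfying (x₀ − ζx₁)·q = 0, (x₂ − ζx₃)·q = 0 and (x₄ − ζx₅)·q = 0 in R is one-dimensional, spanned by p_ζ = (x₀ + ζx₁)(x₂ + ζx₃)(x₄ + ζx₅). -/
open MvPolynomial

noncomputable section

/-- The class `p_ζ = (x₀+ζx₁)(x₂+ζx₃)(x₄+ζx₅)` in `R`. -/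
def fermatPlaneClass (ζ : ℂ) : FermatJacRing :=
  fermatπ ((X 0 + C ζ * X 1) * (X 2 + C ζ * X 3) * (X 4 + C ζ * X 5))

namespace FermatAux

/-- shorthand for `single i 1`. -/
abbrev s (i : Fin 6) : Fin 6 →₀ ℕ := Finsupp.single i 1

/-- squarefree exponent vector -/
def SF (d : Fin 6 →₀ ℕ) : Prop := ∀ i, d i ≤ 1

/-- The plane polynomial. -/
def Pp (ζ : ℂ) : MvPolynomial (Fin 6) ℂ :=
  (X 0 + C ζ * X 1) * (X 2 + C ζ * X 3) * (X 4 + C ζ * X 5)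

lemma Pexp (ζ : ℂ) :
    Pp ζ =
      monomial (s 0 + (s 2 + s 4)) 1 + monomial (s 1 + (s 2 + s 4)) ζ +
      monomial (s 0 + (s 3 + s 4)) ζ + monomial (s 0 + (s 2 + s 5)) ζ +
      monomial (s 1 + (s 3 + s 4)) (ζ^2) + monomial (s 1 + (s 2 + s 5)) (ζ^2) +
      monomial (s 0 + (s 3 + s 5)) (ζ^2) + monomial (s 1 + (s 3 + s 5)) (ζ^3) := by
  have hX : ∀ i : Fin 6, (X i : MvPolynomial (Fin 6) ℂ) = monomial (s i) 1 := fun i => rfl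
  rw [Pp]
  simp only [hX, add_mul, mul_add, monomial_mul, C_mul_monomial, mul_one, one_mul, ← add_assoc]
  ring_nf

lemma Pp_homog (ζ : ℂ) : (Pp ζ).IsHomogeneous 3 := by
  have h1 : (X 0 + C ζ * X 1 : MvPolynomial (Fin 6) ℂ).IsHomogeneous 1 :=
    (isHomogeneous_X _ _).add (isHomogeneous_C_mul_X _ _)
  have h2 : (X 2 + C ζ * X 3 : MvPolynomial (Fin 6) ℂ).IsHomogeneous 1 :=
    (isHomogeneous_X _ _).add (isHomogeneous_C_mul_X _ _)
  have h3 : (X 4 + C ζ * X 5 : MvPolynomial (Fin 6) ℂ).IsHomogeneous 1 :=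
    (isHomogeneous_X _ _).add (isHomogeneous_C_mul_X _ _)
  have := (h1.mul h2).mul h3
  norm_num at this
  exact this

lemma SF2 (a b : Fin 6) (hab : a ≠ b) : SF (s a + s b) := by
  intro i
  simp only [Finsupp.add_apply, s, Finsupp.single_apply]
  split_ifs <;> simp_all

lemma SF3 (a b c : Fin 6) (hab : a ≠ b) (hac : a ≠ c) (hbc : b ≠ c) :
    SF (s a + (s b + s c)) := by
  intro i
  simp only [Finsupp.add_apply, s, Finsupp.single_apply]
  split_ifs <;> simp_all

lemma SF_step {a : Fin 6} {d : Fin 6 →₀ ℕ} (hd : SF d) (ha : d a = 0) : SF (s a + d) := by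
  intro i
  rcases eq_or_ne a i with rfl | h
  · simp [ha, Finsupp.single_apply]
  · simpa [Finsupp.single_apply, h] using hd i

lemma coeff_eq_zero_of_mem {f : MvPolynomial (Fin 6) ℂ} (hf : f ∈ fermatJacIdeal)
    {d : Fin 6 →₀ ℕ} (hd : SF d) : coeff d f = 0 := by
  rw [fermatJacIdeal, Ideal.mem_span_range_iff_exists_fun] at hf
  obtain ⟨c, rfl⟩ := hf
  rw [coeff_sum]
  refine Finset.sum_eq_zero fun i _ => ?_
  rw [X_pow_eq_monomial, coeff_mul_monomial', if_neg]
  rw [Finsupp.single_le_iff]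
  have := hd i; omega

lemma mem_of_coeff_eq_zero {f : MvPolynomial (Fin 6) ℂ}
    (h : ∀ d, SF d → coeff d f = 0) : f ∈ fermatJacIdeal := by
  rw [f.as_sum]
  refine Ideal.sum_mem _ fun d _ => ?_
  by_cases hd : SF d
  · rw [h d hd, monomial_zero]; exact zero_mem _
  · simp only [SF, not_forall] at hd
    obtain ⟨i, hi⟩ := hd
    have h2 : Finsupp.single i 2 ≤ d := Finsupp.single_le_iff.2 (by omega)
    have hm : monomial d (coeff d f)
        = monomial (d - Finsupp.single i 2) (coeff d f) * X i ^ 2 := by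
      rw [X_pow_eq_monomial, monomial_mul, mul_one, tsub_add_cancel_of_le h2]
    rw [hm]
    exact Ideal.mul_mem_left _ _ (Ideal.subset_span ⟨i, rfl⟩)

lemma pi_zero {x : MvPolynomial (Fin 6) ℂ} : fermatπ x = 0 ↔ x ∈ fermatJacIdeal := by
  rw [fermatπ, Ideal.Quotient.mkₐ_eq_mk, Ideal.Quotient.eq_zero_iff_mem]

variable (ζ : ℂ) (f : MvPolynomial (Fin 6) ℂ) {a b : Fin 6}

lemma L1 (hk : ∀ e, SF e → coeff e ((X a - C ζ * X b) * f) = 0) (hab : a ≠ b)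
    (d : Fin 6 →₀ ℕ) (hd : SF d) (ha : d a = 0) (hb : d b = 0) : coeff d f = 0 := by
  have he := hk (s a + d) (SF_step hd ha)
  rw [sub_mul, coeff_sub, mul_assoc, coeff_C_mul, coeff_X_mul, coeff_X_mul'] at he
  rw [if_neg (by simp [Finsupp.single_apply, hb, hab])] at he
  simpa using he

lemma L2 (hk : ∀ e, SF e → coeff e ((X a - C ζ * X b) * f) = 0) (hab : a ≠ b)
    (d : Fin 6 →₀ ℕ) (hd : SF d) (ha : d a = 0) (hb : d b = 0)
    (u v : Fin 6 →₀ ℕ) (hu : u = s b + d) (hv : v = s a + d) :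
    coeff u f = ζ * coeff v f := by
  have hsf : SF (s a + (s b + d)) := by
    apply SF_step _ (by simp [Finsupp.single_apply, hab.symm, ha])
    exact SF_step hd hb
  have he := hk (s a + (s b + d)) hsf
  rw [sub_mul, coeff_sub, mul_assoc, coeff_C_mul, coeff_X_mul,
    show s a + (s b + d) = s b + (s a + d) by abel, coeff_X_mul] at he
  rw [hu, hv]
  linear_combination he

lemma cP_024 (ζ : ℂ) : coeff (s 0 + (s 2 + s 4)) (Pp ζ) = 1 := by
  rw [Pexp]
  simp only [coeff_add, coeff_monomial]
  rw [if_neg (show ¬((s 1 + (s 2 + s 4)) = (s 0 + (s 2 + s 4))) from fun h => by have := DFunLike.congr_fun h 1; simp [Finsupp.single_apply] at this)]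
  rw [if_neg (show ¬((s 0 + (s 3 + s 4)) = (s 0 + (s 2 + s 4))) from fun h => by have := DFunLike.congr_fun h 3; simp [Finsupp.single_apply] at this)]
  rw [if_neg (show ¬((s 0 + (s 2 + s 5)) = (s 0 + (s 2 + s 4))) from fun h => by have := DFunLike.congr_fun h 5; simp [Finsupp.single_apply] at this)]
  rw [if_neg (show ¬((s 1 + (s 3 + s 4)) = (s 0 + (s 2 + s 4))) from fun h => by have := DFunLike.congr_fun h 1; simp [Finsupp.single_apply] at this)]
  rw [if_neg (show ¬((s 1 + (s 2 + s 5)) = (s 0 + (s 2 + s 4))) from fun h => by have := DFunLike.congr_fun h 1; simp [Finsupp.single_apply] at this)]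
  rw [if_neg (show ¬((s 0 + (s 3 + s 5)) = (s 0 + (s 2 + s 4))) from fun h => by have := DFunLike.congr_fun h 3; simp [Finsupp.single_apply] at this)]
  rw [if_neg (show ¬((s 1 + (s 3 + s 5)) = (s 0 + (s 2 + s 4))) from fun h => by have := DFunLike.congr_fun h 1; simp [Finsupp.single_apply] at this)]
  norm_num

lemma cP_124 (ζ : ℂ) : coeff (s 1 + (s 2 + s 4)) (Pp ζ) = ζ := by
  rw [Pexp]
  simp only [coeff_add, coeff_monomial]
  rw [if_neg (show ¬((s 0 + (s 2 + s 4)) = (s 1 + (s 2 + s 4))) from fun h => by have := DFunLike.congr_fun h 0; simp [Finsupp.single_apply] at this)]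
  rw [if_neg (show ¬((s 0 + (s 3 + s 4)) = (s 1 + (s 2 + s 4))) from fun h => by have := DFunLike.congr_fun h 0; simp [Finsupp.single_apply] at this)]
  rw [if_neg (show ¬((s 0 + (s 2 + s 5)) = (s 1 + (s 2 + s 4))) from fun h => by have := DFunLike.congr_fun h 0; simp [Finsupp.single_apply] at this)]
  rw [if_neg (show ¬((s 1 + (s 3 + s 4)) = (s 1 + (s 2 + s 4))) from fun h => by have := DFunLike.congr_fun h 3; simp [Finsupp.single_apply] at this)]
  rw [if_neg (show ¬((s 1 + (s 2 + s 5)) = (s 1 + (s 2 + s 4))) from fun h => by have := DFunLike.congr_fun h 5; simp [Finsupp.single_apply] at this)]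
  rw [if_neg (show ¬((s 0 + (s 3 + s 5)) = (s 1 + (s 2 + s 4))) from fun h => by have := DFunLike.congr_fun h 0; simp [Finsupp.single_apply] at this)]
  rw [if_neg (show ¬((s 1 + (s 3 + s 5)) = (s 1 + (s 2 + s 4))) from fun h => by have := DFunLike.congr_fun h 3; simp [Finsupp.single_apply] at this)]
  norm_num

lemma cP_034 (ζ : ℂ) : coeff (s 0 + (s 3 + s 4)) (Pp ζ) = ζ := by
  rw [Pexp]
  simp only [coeff_add, coeff_monomial]
  rw [if_neg (show ¬((s 0 + (s 2 + s 4)) = (s 0 + (s 3 + s 4))) from fun h => by have := DFunLike.congr_fun h 2; simp [Finsupp.single_apply] at this)]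
  rw [if_neg (show ¬((s 1 + (s 2 + s 4)) = (s 0 + (s 3 + s 4))) from fun h => by have := DFunLike.congr_fun h 1; simp [Finsupp.single_apply] at this)]
  rw [if_neg (show ¬((s 0 + (s 2 + s 5)) = (s 0 + (s 3 + s 4))) from fun h => by have := DFunLike.congr_fun h 2; simp [Finsupp.single_apply] at this)]
  rw [if_neg (show ¬((s 1 + (s 3 + s 4)) = (s 0 + (s 3 + s 4))) from fun h => by have := DFunLike.congr_fun h 1; simp [Finsupp.single_apply] at this)]
  rw [if_neg (show ¬((s 1 + (s 2 + s 5)) = (s 0 + (s 3 + s 4))) from fun h => by have := DFunLike.congr_fun h 1; simp [Finsupp.single_apply] at this)]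
  rw [if_neg (show ¬((s 0 + (s 3 + s 5)) = (s 0 + (s 3 + s 4))) from fun h => by have := DFunLike.congr_fun h 5; simp [Finsupp.single_apply] at this)]
  rw [if_neg (show ¬((s 1 + (s 3 + s 5)) = (s 0 + (s 3 + s 4))) from fun h => by have := DFunLike.congr_fun h 1; simp [Finsupp.single_apply] at this)]
  norm_num

lemma cP_025 (ζ : ℂ) : coeff (s 0 + (s 2 + s 5)) (Pp ζ) = ζ := by
  rw [Pexp]
  simp only [coeff_add, coeff_monomial]
  rw [if_neg (show ¬((s 0 + (s 2 + s 4)) = (s 0 + (s 2 + s 5))) from fun h => by have := DFunLike.congr_fun h 4; simp [Finsupp.single_apply] at this)]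
  rw [if_neg (show ¬((s 1 + (s 2 + s 4)) = (s 0 + (s 2 + s 5))) from fun h => by have := DFunLike.congr_fun h 1; simp [Finsupp.single_apply] at this)]
  rw [if_neg (show ¬((s 0 + (s 3 + s 4)) = (s 0 + (s 2 + s 5))) from fun h => by have := DFunLike.congr_fun h 3; simp [Finsupp.single_apply] at this)]
  rw [if_neg (show ¬((s 1 + (s 3 + s 4)) = (s 0 + (s 2 + s 5))) from fun h => by have := DFunLike.congr_fun h 1; simp [Finsupp.single_apply] at this)]
  rw [if_neg (show ¬((s 1 + (s 2 + s 5)) = (s 0 + (s 2 + s 5))) from fun h => by have := DFunLike.congr_fun h 1; simp [Finsupp.single_apply] at this)]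
  rw [if_neg (show ¬((s 0 + (s 3 + s 5)) = (s 0 + (s 2 + s 5))) from fun h => by have := DFunLike.congr_fun h 3; simp [Finsupp.single_apply] at this)]
  rw [if_neg (show ¬((s 1 + (s 3 + s 5)) = (s 0 + (s 2 + s 5))) from fun h => by have := DFunLike.congr_fun h 1; simp [Finsupp.single_apply] at this)]
  norm_num

lemma cP_134 (ζ : ℂ) : coeff (s 1 + (s 3 + s 4)) (Pp ζ) = ζ^2 := by
  rw [Pexp]
  simp only [coeff_add, coeff_monomial]
  rw [if_neg (show ¬((s 0 + (s 2 + s 4)) = (s 1 + (s 3 + s 4))) from fun h => by have := DFunLike.congr_fun h 0; simp [Finsupp.single_apply] at this)]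
  rw [if_neg (show ¬((s 1 + (s 2 + s 4)) = (s 1 + (s 3 + s 4))) from fun h => by have := DFunLike.congr_fun h 2; simp [Finsupp.single_apply] at this)]
  rw [if_neg (show ¬((s 0 + (s 3 + s 4)) = (s 1 + (s 3 + s 4))) from fun h => by have := DFunLike.congr_fun h 0; simp [Finsupp.single_apply] at this)]
  rw [if_neg (show ¬((s 0 + (s 2 + s 5)) = (s 1 + (s 3 + s 4))) from fun h => by have := DFunLike.congr_fun h 0; simp [Finsupp.single_apply] at this)]
  rw [if_neg (show ¬((s 1 + (s 2 + s 5)) = (s 1 + (s 3 + s 4))) from fun h => by have := DFunLike.congr_fun h 2; simp [Finsupp.single_apply] at this)]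
  rw [if_neg (show ¬((s 0 + (s 3 + s 5)) = (s 1 + (s 3 + s 4))) from fun h => by have := DFunLike.congr_fun h 0; simp [Finsupp.single_apply] at this)]
  rw [if_neg (show ¬((s 1 + (s 3 + s 5)) = (s 1 + (s 3 + s 4))) from fun h => by have := DFunLike.congr_fun h 5; simp [Finsupp.single_apply] at this)]
  norm_num

lemma cP_125 (ζ : ℂ) : coeff (s 1 + (s 2 + s 5)) (Pp ζ) = ζ^2 := by
  rw [Pexp]
  simp only [coeff_add, coeff_monomial]
  rw [if_neg (show ¬((s 0 + (s 2 + s 4)) = (s 1 + (s 2 + s 5))) from fun h => by have := DFunLike.congr_fun h 0; simp [Finsupp.single_apply] at this)]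
  rw [if_neg (show ¬((s 1 + (s 2 + s 4)) = (s 1 + (s 2 + s 5))) from fun h => by have := DFunLike.congr_fun h 4; simp [Finsupp.single_apply] at this)]
  rw [if_neg (show ¬((s 0 + (s 3 + s 4)) = (s 1 + (s 2 + s 5))) from fun h => by have := DFunLike.congr_fun h 0; simp [Finsupp.single_apply] at this)]
  rw [if_neg (show ¬((s 0 + (s 2 + s 5)) = (s 1 + (s 2 + s 5))) from fun h => by have := DFunLike.congr_fun h 0; simp [Finsupp.single_apply] at this)]
  rw [if_neg (show ¬((s 1 + (s 3 + s 4)) = (s 1 + (s 2 + s 5))) from fun h => by have := DFunLike.congr_fun h 3; simp [Finsupp.single_apply] at this)]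
  rw [if_neg (show ¬((s 0 + (s 3 + s 5)) = (s 1 + (s 2 + s 5))) from fun h => by have := DFunLike.congr_fun h 0; simp [Finsupp.single_apply] at this)]
  rw [if_neg (show ¬((s 1 + (s 3 + s 5)) = (s 1 + (s 2 + s 5))) from fun h => by have := DFunLike.congr_fun h 3; simp [Finsupp.single_apply] at this)]
  norm_num

lemma cP_035 (ζ : ℂ) : coeff (s 0 + (s 3 + s 5)) (Pp ζ) = ζ^2 := by
  rw [Pexp]
  simp only [coeff_add, coeff_monomial]
  rw [if_neg (show ¬((s 0 + (s 2 + s 4)) = (s 0 + (s 3 + s 5))) from fun h => by have := DFunLike.congr_fun h 2; simp [Finsupp.single_apply] at this)]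
  rw [if_neg (show ¬((s 1 + (s 2 + s 4)) = (s 0 + (s 3 + s 5))) from fun h => by have := DFunLike.congr_fun h 1; simp [Finsupp.single_apply] at this)]
  rw [if_neg (show ¬((s 0 + (s 3 + s 4)) = (s 0 + (s 3 + s 5))) from fun h => by have := DFunLike.congr_fun h 4; simp [Finsupp.single_apply] at this)]
  rw [if_neg (show ¬((s 0 + (s 2 + s 5)) = (s 0 + (s 3 + s 5))) from fun h => by have := DFunLike.congr_fun h 2; simp [Finsupp.single_apply] at this)]
  rw [if_neg (show ¬((s 1 + (s 3 + s 4)) = (s 0 + (s 3 + s 5))) from fun h => by have := DFunLike.congr_fun h 1; simp [Finsupp.single_apply] at this)]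
  rw [if_neg (show ¬((s 1 + (s 2 + s 5)) = (s 0 + (s 3 + s 5))) from fun h => by have := DFunLike.congr_fun h 1; simp [Finsupp.single_apply] at this)]
  rw [if_neg (show ¬((s 1 + (s 3 + s 5)) = (s 0 + (s 3 + s 5))) from fun h => by have := DFunLike.congr_fun h 1; simp [Finsupp.single_apply] at this)]
  norm_num

lemma cP_135 (ζ : ℂ) : coeff (s 1 + (s 3 + s 5)) (Pp ζ) = ζ^3 := by
  rw [Pexp]
  simp only [coeff_add, coeff_monomial]
  rw [if_neg (show ¬((s 0 + (s 2 + s 4)) = (s 1 + (s 3 + s 5))) from fun h => by have := DFunLike.congr_fun h 0; simp [Finsupp.single_apply] at this)]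
  rw [if_neg (show ¬((s 1 + (s 2 + s 4)) = (s 1 + (s 3 + s 5))) from fun h => by have := DFunLike.congr_fun h 2; simp [Finsupp.single_apply] at this)]
  rw [if_neg (show ¬((s 0 + (s 3 + s 4)) = (s 1 + (s 3 + s 5))) from fun h => by have := DFunLike.congr_fun h 0; simp [Finsupp.single_apply] at this)]
  rw [if_neg (show ¬((s 0 + (s 2 + s 5)) = (s 1 + (s 3 + s 5))) from fun h => by have := DFunLike.congr_fun h 0; simp [Finsupp.single_apply] at this)]
  rw [if_neg (show ¬((s 1 + (s 3 + s 4)) = (s 1 + (s 3 + s 5))) from fun h => by have := DFunLike.congr_fun h 4; simp [Finsupp.single_apply] at this)]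
  rw [if_neg (show ¬((s 1 + (s 2 + s 5)) = (s 1 + (s 3 + s 5))) from fun h => by have := DFunLike.congr_fun h 2; simp [Finsupp.single_apply] at this)]
  rw [if_neg (show ¬((s 0 + (s 3 + s 5)) = (s 1 + (s 3 + s 5))) from fun h => by have := DFunLike.congr_fun h 0; simp [Finsupp.single_apply] at this)]
  norm_num

lemma cP_miss01 (ζ : ℂ) (d : Fin 6 →₀ ℕ) (hp : d 0 = 0) (hq : d 1 = 0) : coeff d (Pp ζ) = 0 := by
  rw [Pexp]
  simp only [coeff_add, coeff_monomial]
  rw [if_neg (show ¬((s 0 + (s 2 + s 4)) = d) from fun h => by have := DFunLike.congr_fun h 0; rw [hp] at this; simp [Finsupp.single_apply] at this)]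
  rw [if_neg (show ¬((s 1 + (s 2 + s 4)) = d) from fun h => by have := DFunLike.congr_fun h 1; rw [hq] at this; simp [Finsupp.single_apply] at this)]
  rw [if_neg (show ¬((s 0 + (s 3 + s 4)) = d) from fun h => by have := DFunLike.congr_fun h 0; rw [hp] at this; simp [Finsupp.single_apply] at this)]
  rw [if_neg (show ¬((s 0 + (s 2 + s 5)) = d) from fun h => by have := DFunLike.congr_fun h 0; rw [hp] at this; simp [Finsupp.single_apply] at this)]
  rw [if_neg (show ¬((s 1 + (s 3 + s 4)) = d) from fun h => by have := DFunLike.congr_fun h 1; rw [hq] at this; simp [Finsupp.single_apply] at this)]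
  rw [if_neg (show ¬((s 1 + (s 2 + s 5)) = d) from fun h => by have := DFunLike.congr_fun h 1; rw [hq] at this; simp [Finsupp.single_apply] at this)]
  rw [if_neg (show ¬((s 0 + (s 3 + s 5)) = d) from fun h => by have := DFunLike.congr_fun h 0; rw [hp] at this; simp [Finsupp.single_apply] at this)]
  rw [if_neg (show ¬((s 1 + (s 3 + s 5)) = d) from fun h => by have := DFunLike.congr_fun h 1; rw [hq] at this; simp [Finsupp.single_apply] at this)]
  norm_num

lemma cP_miss23 (ζ : ℂ) (d : Fin 6 →₀ ℕ) (hp : d 2 = 0) (hq : d 3 = 0) : coeff d (Pp ζ) = 0 := by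
  rw [Pexp]
  simp only [coeff_add, coeff_monomial]
  rw [if_neg (show ¬((s 0 + (s 2 + s 4)) = d) from fun h => by have := DFunLike.congr_fun h 2; rw [hp] at this; simp [Finsupp.single_apply] at this)]
  rw [if_neg (show ¬((s 1 + (s 2 + s 4)) = d) from fun h => by have := DFunLike.congr_fun h 2; rw [hp] at this; simp [Finsupp.single_apply] at this)]
  rw [if_neg (show ¬((s 0 + (s 3 + s 4)) = d) from fun h => by have := DFunLike.congr_fun h 3; rw [hq] at this; simp [Finsupp.single_apply] at this)]
  rw [if_neg (show ¬((s 0 + (s 2 + s 5)) = d) from fun h => by have := DFunLike.congr_fun h 2; rw [hp] at this; simp [Finsupp.single_apply] at this)]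
  rw [if_neg (show ¬((s 1 + (s 3 + s 4)) = d) from fun h => by have := DFunLike.congr_fun h 3; rw [hq] at this; simp [Finsupp.single_apply] at this)]
  rw [if_neg (show ¬((s 1 + (s 2 + s 5)) = d) from fun h => by have := DFunLike.congr_fun h 2; rw [hp] at this; simp [Finsupp.single_apply] at this)]
  rw [if_neg (show ¬((s 0 + (s 3 + s 5)) = d) from fun h => by have := DFunLike.congr_fun h 3; rw [hq] at this; simp [Finsupp.single_apply] at this)]
  rw [if_neg (show ¬((s 1 + (s 3 + s 5)) = d) from fun h => by have := DFunLike.congr_fun h 3; rw [hq] at this; simp [Finsupp.single_apply] at this)]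
  norm_num

lemma cP_miss45 (ζ : ℂ) (d : Fin 6 →₀ ℕ) (hp : d 4 = 0) (hq : d 5 = 0) : coeff d (Pp ζ) = 0 := by
  rw [Pexp]
  simp only [coeff_add, coeff_monomial]
  rw [if_neg (show ¬((s 0 + (s 2 + s 4)) = d) from fun h => by have := DFunLike.congr_fun h 4; rw [hp] at this; simp [Finsupp.single_apply] at this)]
  rw [if_neg (show ¬((s 1 + (s 2 + s 4)) = d) from fun h => by have := DFunLike.congr_fun h 4; rw [hp] at this; simp [Finsupp.single_apply] at this)]
  rw [if_neg (show ¬((s 0 + (s 3 + s 4)) = d) from fun h => by have := DFunLike.congr_fun h 4; rw [hp] at this; simp [Finsupp.single_apply] at this)]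
  rw [if_neg (show ¬((s 0 + (s 2 + s 5)) = d) from fun h => by have := DFunLike.congr_fun h 5; rw [hq] at this; simp [Finsupp.single_apply] at this)]
  rw [if_neg (show ¬((s 1 + (s 3 + s 4)) = d) from fun h => by have := DFunLike.congr_fun h 4; rw [hp] at this; simp [Finsupp.single_apply] at this)]
  rw [if_neg (show ¬((s 1 + (s 2 + s 5)) = d) from fun h => by have := DFunLike.congr_fun h 5; rw [hq] at this; simp [Finsupp.single_apply] at this)]
  rw [if_neg (show ¬((s 0 + (s 3 + s 5)) = d) from fun h => by have := DFunLike.congr_fun h 5; rw [hq] at this; simp [Finsupp.single_apply] at this)]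
  rw [if_neg (show ¬((s 1 + (s 3 + s 5)) = d) from fun h => by have := DFunLike.congr_fun h 5; rw [hq] at this; simp [Finsupp.single_apply] at this)]
  norm_num

lemma enum {d : Fin 6 →₀ ℕ} (hd : SF d)
    (h3 : d 0 + d 1 + d 2 + d 3 + d 4 + d 5 = 3) :
    (d 0 = 0 ∧ d 1 = 0) ∨ (d 2 = 0 ∧ d 3 = 0) ∨ (d 4 = 0 ∧ d 5 = 0) ∨
    (d = s 0 + (s 2 + s 4)) ∨ (d = s 1 + (s 2 + s 4)) ∨ (d = s 0 + (s 3 + s 4)) ∨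
    (d = s 0 + (s 2 + s 5)) ∨ (d = s 1 + (s 3 + s 4)) ∨ (d = s 1 + (s 2 + s 5)) ∨
    (d = s 0 + (s 3 + s 5)) ∨ (d = s 1 + (s 3 + s 5)) := by
  have h0 := hd 0; have h1 := hd 1; have h2 := hd 2; have h3' := hd 3
  have h4 := hd 4; have h5 := hd 5
  by_cases c1 : d 0 = 0 ∧ d 1 = 0
  · exact Or.inl c1
  by_cases c2 : d 2 = 0 ∧ d 3 = 0
  · exact Or.inr (Or.inl c2)
  by_cases c3 : d 4 = 0 ∧ d 5 = 0
  · exact Or.inr (Or.inr (Or.inl c3))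
  have e0 : d 0 = 0 ∨ d 0 = 1 := by omega
  have e2 : d 2 = 0 ∨ d 2 = 1 := by omega
  have e4 : d 4 = 0 ∨ d 4 = 1 := by omega
  rcases e0 with ha | ha <;> rcases e2 with hb | hb <;> rcases e4 with hc | hc
  · -- d = (1, 3, 5)
    have w0 : d 0 = 0 := by omega
    have w1 : d 1 = 1 := by omega
    have w2 : d 2 = 0 := by omega
    have w3 : d 3 = 1 := by omega
    have w4 : d 4 = 0 := by omega
    have w5 : d 5 = 1 := by omega
    refine Or.inr (Or.inr (Or.inr (Or.inr (Or.inr (Or.inr (Or.inr (Or.inr (Or.inr (Or.inr (?_))))))))))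
    ext i; fin_cases i <;> simp [w0,w1,w2,w3,w4,w5, Finsupp.single_apply]
  · -- d = (1, 3, 4)
    have w0 : d 0 = 0 := by omega
    have w1 : d 1 = 1 := by omega
    have w2 : d 2 = 0 := by omega
    have w3 : d 3 = 1 := by omega
    have w4 : d 4 = 1 := by omega
    have w5 : d 5 = 0 := by omega
    refine Or.inr (Or.inr (Or.inr (Or.inr (Or.inr (Or.inr (Or.inr (Or.inl ?_)))))))
    ext i; fin_cases i <;> simp [w0,w1,w2,w3,w4,w5, Finsupp.single_apply]
  · -- d = (1, 2, 5)
    have w0 : d 0 = 0 := by omega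
    have w1 : d 1 = 1 := by omega
    have w2 : d 2 = 1 := by omega
    have w3 : d 3 = 0 := by omega
    have w4 : d 4 = 0 := by omega
    have w5 : d 5 = 1 := by omega
    refine Or.inr (Or.inr (Or.inr (Or.inr (Or.inr (Or.inr (Or.inr (Or.inr (Or.inl ?_))))))))
    ext i; fin_cases i <;> simp [w0,w1,w2,w3,w4,w5, Finsupp.single_apply]
  · -- d = (1, 2, 4)
    have w0 : d 0 = 0 := by omega
    have w1 : d 1 = 1 := by omega
    have w2 : d 2 = 1 := by omega
    have w3 : d 3 = 0 := by omega
    have w4 : d 4 = 1 := by omega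
    have w5 : d 5 = 0 := by omega
    refine Or.inr (Or.inr (Or.inr (Or.inr (Or.inl ?_))))
    ext i; fin_cases i <;> simp [w0,w1,w2,w3,w4,w5, Finsupp.single_apply]
  · -- d = (0, 3, 5)
    have w0 : d 0 = 1 := by omega
    have w1 : d 1 = 0 := by omega
    have w2 : d 2 = 0 := by omega
    have w3 : d 3 = 1 := by omega
    have w4 : d 4 = 0 := by omega
    have w5 : d 5 = 1 := by omega
    refine Or.inr (Or.inr (Or.inr (Or.inr (Or.inr (Or.inr (Or.inr (Or.inr (Or.inr (Or.inl ?_)))))))))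
    ext i; fin_cases i <;> simp [w0,w1,w2,w3,w4,w5, Finsupp.single_apply]
  · -- d = (0, 3, 4)
    have w0 : d 0 = 1 := by omega
    have w1 : d 1 = 0 := by omega
    have w2 : d 2 = 0 := by omega
    have w3 : d 3 = 1 := by omega
    have w4 : d 4 = 1 := by omega
    have w5 : d 5 = 0 := by omega
    refine Or.inr (Or.inr (Or.inr (Or.inr (Or.inr (Or.inl ?_)))))
    ext i; fin_cases i <;> simp [w0,w1,w2,w3,w4,w5, Finsupp.single_apply]
  · -- d = (0, 2, 5)
    have w0 : d 0 = 1 := by omega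
    have w1 : d 1 = 0 := by omega
    have w2 : d 2 = 1 := by omega
    have w3 : d 3 = 0 := by omega
    have w4 : d 4 = 0 := by omega
    have w5 : d 5 = 1 := by omega
    refine Or.inr (Or.inr (Or.inr (Or.inr (Or.inr (Or.inr (Or.inl ?_))))))
    ext i; fin_cases i <;> simp [w0,w1,w2,w3,w4,w5, Finsupp.single_apply]
  · -- d = (0, 2, 4)
    have w0 : d 0 = 1 := by omega
    have w1 : d 1 = 0 := by omega
    have w2 : d 2 = 1 := by omega
    have w3 : d 3 = 0 := by omega
    have w4 : d 4 = 1 := by omega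
    have w5 : d 5 = 0 := by omega
    refine Or.inr (Or.inr (Or.inr (Or.inl ?_)))
    ext i; fin_cases i <;> simp [w0,w1,w2,w3,w4,w5, Finsupp.single_apply]

lemma key (hζ : ζ^3 = -1) (hf : f.IsHomogeneous 3)
    (hk1 : ∀ e, SF e → coeff e ((X 0 - C ζ * X 1) * f) = 0)
    (hk2 : ∀ e, SF e → coeff e ((X 2 - C ζ * X 3) * f) = 0)
    (hk3 : ∀ e, SF e → coeff e ((X 4 - C ζ * X 5) * f) = 0)
    (d : Fin 6 →₀ ℕ) (hd : SF d) :
    coeff d (f + coeff (s 1 + (s 3 + s 5)) f • Pp ζ) = 0 := by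
  rw [coeff_add, coeff_smul, smul_eq_mul]
  by_cases hdeg : d.degree = 3
  case neg =>
    rw [hf.coeff_eq_zero hdeg, ((Pp_homog ζ).coeff_eq_zero hdeg)]; ring
  case pos =>
  have hsum : d 0 + d 1 + d 2 + d 3 + d 4 + d 5 = 3 := by
    have h' : d.degree = ∑ i : Fin 6, d i :=
      Finset.sum_subset (Finset.subset_univ _)
        (fun i _ hi => Finsupp.notMem_support_iff.1 hi)
    rw [hdeg, Fin.sum_univ_six] at h'
    omega
  rcases enum hd hsum with h | h | h | hde | hde | hde | hde | hde | hde | hde | hde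
  · rw [L1 ζ f hk1 (by decide) d hd h.1 h.2, cP_miss01 ζ d h.1 h.2]; ring
  · rw [L1 ζ f hk2 (by decide) d hd h.1 h.2, cP_miss23 ζ d h.1 h.2]; ring
  · rw [L1 ζ f hk3 (by decide) d hd h.1 h.2, cP_miss45 ζ d h.1 h.2]; ring
  · -- transversal (0, 2, 4)
    rw [hde, cP_024]
    have r1 : coeff (s 1 + (s 3 + s 5)) f = ζ * coeff (s 0 + (s 3 + s 5)) f :=
      L2 ζ f hk1 (by decide) (s 3 + s 5) (SF2 _ _ (by decide)) (by simp [Finsupp.single_apply]) (by simp [Finsupp.single_apply]) _ _ (by abel) (by abel)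
    have r2 : coeff (s 0 + (s 3 + s 5)) f = ζ * coeff (s 0 + (s 2 + s 5)) f :=
      L2 ζ f hk2 (by decide) (s 0 + s 5) (SF2 _ _ (by decide)) (by simp [Finsupp.single_apply]) (by simp [Finsupp.single_apply]) _ _ (by abel) (by abel)
    have r3 : coeff (s 0 + (s 2 + s 5)) f = ζ * coeff (s 0 + (s 2 + s 4)) f :=
      L2 ζ f hk3 (by decide) (s 0 + s 2) (SF2 _ _ (by decide)) (by simp [Finsupp.single_apply]) (by simp [Finsupp.single_apply]) _ _ (by abel) (by abel)
    linear_combination r1 + ζ * r2 + ζ^2 * r3 + coeff (s 0 + (s 2 + s 4)) f * hζ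
  · -- transversal (1, 2, 4)
    rw [hde, cP_124]
    have r2 : coeff (s 1 + (s 3 + s 5)) f = ζ * coeff (s 1 + (s 2 + s 5)) f :=
      L2 ζ f hk2 (by decide) (s 1 + s 5) (SF2 _ _ (by decide)) (by simp [Finsupp.single_apply]) (by simp [Finsupp.single_apply]) _ _ (by abel) (by abel)
    have r3 : coeff (s 1 + (s 2 + s 5)) f = ζ * coeff (s 1 + (s 2 + s 4)) f :=
      L2 ζ f hk3 (by decide) (s 1 + s 2) (SF2 _ _ (by decide)) (by simp [Finsupp.single_apply]) (by simp [Finsupp.single_apply]) _ _ (by abel) (by abel)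
    linear_combination ζ * r2 + ζ^2 * r3 + coeff (s 1 + (s 2 + s 4)) f * hζ
  · -- transversal (0, 3, 4)
    rw [hde, cP_034]
    have r1 : coeff (s 1 + (s 3 + s 5)) f = ζ * coeff (s 0 + (s 3 + s 5)) f :=
      L2 ζ f hk1 (by decide) (s 3 + s 5) (SF2 _ _ (by decide)) (by simp [Finsupp.single_apply]) (by simp [Finsupp.single_apply]) _ _ (by abel) (by abel)
    have r3 : coeff (s 0 + (s 3 + s 5)) f = ζ * coeff (s 0 + (s 3 + s 4)) f :=
      L2 ζ f hk3 (by decide) (s 0 + s 3) (SF2 _ _ (by decide)) (by simp [Finsupp.single_apply]) (by simp [Finsupp.single_apply]) _ _ (by abel) (by abel)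
    linear_combination ζ * r1 + ζ^2 * r3 + coeff (s 0 + (s 3 + s 4)) f * hζ
  · -- transversal (0, 2, 5)
    rw [hde, cP_025]
    have r1 : coeff (s 1 + (s 3 + s 5)) f = ζ * coeff (s 0 + (s 3 + s 5)) f :=
      L2 ζ f hk1 (by decide) (s 3 + s 5) (SF2 _ _ (by decide)) (by simp [Finsupp.single_apply]) (by simp [Finsupp.single_apply]) _ _ (by abel) (by abel)
    have r2 : coeff (s 0 + (s 3 + s 5)) f = ζ * coeff (s 0 + (s 2 + s 5)) f :=
      L2 ζ f hk2 (by decide) (s 0 + s 5) (SF2 _ _ (by decide)) (by simp [Finsupp.single_apply]) (by simp [Finsupp.single_apply]) _ _ (by abel) (by abel)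
    linear_combination ζ * r1 + ζ^2 * r2 + coeff (s 0 + (s 2 + s 5)) f * hζ
  · -- transversal (1, 3, 4)
    rw [hde, cP_134]
    have r3 : coeff (s 1 + (s 3 + s 5)) f = ζ * coeff (s 1 + (s 3 + s 4)) f :=
      L2 ζ f hk3 (by decide) (s 1 + s 3) (SF2 _ _ (by decide)) (by simp [Finsupp.single_apply]) (by simp [Finsupp.single_apply]) _ _ (by abel) (by abel)
    linear_combination ζ^2 * r3 + coeff (s 1 + (s 3 + s 4)) f * hζ
  · -- transversal (1, 2, 5)
    rw [hde, cP_125]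
    have r2 : coeff (s 1 + (s 3 + s 5)) f = ζ * coeff (s 1 + (s 2 + s 5)) f :=
      L2 ζ f hk2 (by decide) (s 1 + s 5) (SF2 _ _ (by decide)) (by simp [Finsupp.single_apply]) (by simp [Finsupp.single_apply]) _ _ (by abel) (by abel)
    linear_combination ζ^2 * r2 + coeff (s 1 + (s 2 + s 5)) f * hζ
  · -- transversal (0, 3, 5)
    rw [hde, cP_035]
    have r1 : coeff (s 1 + (s 3 + s 5)) f = ζ * coeff (s 0 + (s 3 + s 5)) f :=
      L2 ζ f hk1 (by decide) (s 3 + s 5) (SF2 _ _ (by decide)) (by simp [Finsupp.single_apply]) (by simp [Finsupp.single_apply]) _ _ (by abel) (by abel)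
    linear_combination ζ^2 * r1 + coeff (s 0 + (s 3 + s 5)) f * hζ
  · -- transversal (1, 3, 5)
    rw [hde, cP_135]
    linear_combination coeff (s 1 + (s 3 + s 5)) f * hζ

end FermatAux

open FermatAux

/-- Let `R = ℂ[x₀,…,x₅]/(x₀²,…,x₅²)` and `ζ³ = -1`.  The space of degree-3
elements `q` of `R` killed by multiplication by `x₀-ζx₁`, `x₂-ζx₃` and
`x₄-ζx₅` is one-dimensional, spanned by `p_ζ = (x₀+ζx₁)(x₂+ζx₃)(x₄+ζx₅)`. -/
theorem fermat_annihilator_one_dimensional (ζ : ℂ) (hζ : ζ ^ 3 = -1) :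
    fermatDeg 3
        ⊓ LinearMap.ker (LinearMap.mulLeft ℂ (fermatπ (X 0 - C ζ * X 1)))
        ⊓ LinearMap.ker (LinearMap.mulLeft ℂ (fermatπ (X 2 - C ζ * X 3)))
        ⊓ LinearMap.ker (LinearMap.mulLeft ℂ (fermatπ (X 4 - C ζ * X 5)))
      = Submodule.span ℂ {fermatPlaneClass ζ}
    ∧ fermatPlaneClass ζ ≠ 0 := by
  constructor
  · apply le_antisymm
    · intro q hq
      obtain ⟨⟨⟨hq0, hq1⟩, hq2⟩, hq3⟩ := hq
      rw [fermatDeg] at hq0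
      obtain ⟨f, hfm, rfl⟩ := Submodule.mem_map.1 hq0
      rw [mem_homogeneousSubmodule] at hfm
      have hk1 : ∀ e, SF e → coeff e ((X 0 - C ζ * X 1) * f) = 0 := fun e he =>
        coeff_eq_zero_of_mem (pi_zero.1 (by rw [map_mul]; exact LinearMap.mem_ker.1 hq1)) he
      have hk2 : ∀ e, SF e → coeff e ((X 2 - C ζ * X 3) * f) = 0 := fun e he =>
        coeff_eq_zero_of_mem (pi_zero.1 (by rw [map_mul]; exact LinearMap.mem_ker.1 hq2)) he
      have hk3 : ∀ e, SF e → coeff e ((X 4 - C ζ * X 5) * f) = 0 := fun e he =>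
        coeff_eq_zero_of_mem (pi_zero.1 (by rw [map_mul]; exact LinearMap.mem_ker.1 hq3)) he
      have h0 : fermatπ (f + coeff (s 1 + (s 3 + s 5)) f • Pp ζ) = 0 :=
        pi_zero.2 (mem_of_coeff_eq_zero (fun d hd => key ζ f hζ hfm hk1 hk2 hk3 d hd))
      rw [map_add, map_smul] at h0
      rw [Submodule.mem_span_singleton]
      refine ⟨-(coeff (s 1 + (s 3 + s 5)) f), ?_⟩
      show -(coeff (s 1 + (s 3 + s 5)) f) • fermatπ (Pp ζ) = fermatπ f
      rw [neg_smul]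
      exact neg_eq_of_add_eq_zero_left h0
    · rw [Submodule.span_le, Set.singleton_subset_iff]
      refine ⟨⟨⟨?_, ?_⟩, ?_⟩, ?_⟩
      · rw [SetLike.mem_coe, fermatDeg]
        exact Submodule.mem_map.2
          ⟨Pp ζ, (mem_homogeneousSubmodule _ _).2 (Pp_homog ζ), rfl⟩
      · rw [SetLike.mem_coe, LinearMap.mem_ker, LinearMap.mulLeft_apply]
        show fermatπ (X 0 - C ζ * X 1) * fermatπ (Pp ζ) = 0
        rw [← map_mul]
        refine pi_zero.2 ?_
        rw [show (X 0 - C ζ * X 1) * Pp ζ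
            = (X 0 ^ 2 - C ζ * C ζ * X 1 ^ 2) *
              ((X 2 + C ζ * X 3) * (X 4 + C ζ * X 5)) from by rw [Pp]; ring]
        exact Ideal.mul_mem_right _ _
          (Ideal.sub_mem _ (Ideal.subset_span ⟨0, rfl⟩)
            (Ideal.mul_mem_left _ _ (Ideal.subset_span ⟨1, rfl⟩)))
      · rw [SetLike.mem_coe, LinearMap.mem_ker, LinearMap.mulLeft_apply]
        show fermatπ (X 2 - C ζ * X 3) * fermatπ (Pp ζ) = 0
        rw [← map_mul]
        refine pi_zero.2 ?_
        rw [show (X 2 - C ζ * X 3) * Pp ζ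
            = (X 2 ^ 2 - C ζ * C ζ * X 3 ^ 2) *
              ((X 0 + C ζ * X 1) * (X 4 + C ζ * X 5)) from by rw [Pp]; ring]
        exact Ideal.mul_mem_right _ _
          (Ideal.sub_mem _ (Ideal.subset_span ⟨2, rfl⟩)
            (Ideal.mul_mem_left _ _ (Ideal.subset_span ⟨3, rfl⟩)))
      · rw [SetLike.mem_coe, LinearMap.mem_ker, LinearMap.mulLeft_apply]
        show fermatπ (X 4 - C ζ * X 5) * fermatπ (Pp ζ) = 0
        rw [← map_mul]
        refine pi_zero.2 ?_
        rw [show (X 4 - C ζ * X 5) * Pp ζ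
            = (X 4 ^ 2 - C ζ * C ζ * X 5 ^ 2) *
              ((X 0 + C ζ * X 1) * (X 2 + C ζ * X 3)) from by rw [Pp]; ring]
        exact Ideal.mul_mem_right _ _
          (Ideal.sub_mem _ (Ideal.subset_span ⟨4, rfl⟩)
            (Ideal.mul_mem_left _ _ (Ideal.subset_span ⟨5, rfl⟩)))
  · intro h
    have h2 := coeff_eq_zero_of_mem
      (pi_zero.1 (show fermatπ (Pp ζ) = 0 from h))
      (SF3 0 2 4 (by decide) (by decide) (by decide))
    rw [cP_024] at h2
    exact one_ne_zero h2
end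
end

section
/- Let R = ℂ[x₀,…,x₅]/(x₀²,…,x₅²), let ζ ≠ ζ′ be complex numbers with ζ³ = ζ′³ = −1, and set p_ζ = (x₀ + ζx₁)(x₂ + ζx₃)(x₄ + ζx₅) and p_ζ′ = (x₀ + ζ′x₁)(x₂ + ζ′x₃)(x₄ + ζ′x₅) in R. If y ∈ R is the image of a homogeneous linear form and y·p_ζ = 0 and y·p_ζ′ = 0 in R, then y = 0. -/
open MvPolynomial

noncomputable section

/-! ### Auxiliary lemmas -/

set_option maxHeartbeats 4000000 in
theorem FJaux.coeff_mul_C' (m : Fin 6 →₀ ℕ) (a : ℂ) (p : MvPolynomial (Fin 6) ℂ) :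
    coeff m (p * C a) = a * coeff m p := by rw [mul_comm, coeff_C_mul]

theorem FJaux.coeff_mul_Cpow (m : Fin 6 →₀ ℕ) (a : ℂ) (n : ℕ) (p : MvPolynomial (Fin 6) ℂ) :
    coeff m (p * C a ^ n) = a ^ n * coeff m p := by rw [← C_pow, mul_comm, coeff_C_mul]

theorem FJaux.mul_Xsq (p : MvPolynomial (Fin 6) ℂ) (s : Fin 6) :
    p * X s ^ 2 = p * X s * X s := by ring

/-- Squarefree coefficients of elements of the Jacobian ideal vanish. -/
theorem FJaux.coeff_eq_zero_of_mem (z : MvPolynomial (Fin 6) ℂ) (hz : z ∈ fermatJacIdeal) :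
    ∀ m : Fin 6 →₀ ℕ, (∀ i, m i ≤ 1) → coeff m z = 0 := by
  refine Submodule.span_induction ?_ ?_ ?_ ?_ hz
  · rintro x ⟨i, rfl⟩ m hm
    rw [coeff_X_pow]
    rw [if_neg]
    intro heq
    have h2 : (Finsupp.single i 2) i = m i := by rw [heq]
    simp [Finsupp.single_apply] at h2
    have := hm i
    omega
  · intro m _; simp
  · intro x y _ _ hx hy m hm
    simp [coeff_add, hx m hm, hy m hm]
  · intro r x _ hx m hm
    rw [smul_eq_mul, coeff_mul]
    apply Finset.sum_eq_zero
    rintro ⟨u, v⟩ huv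
    rw [Finset.HasAntidiagonal.mem_antidiagonal] at huv
    have hv : ∀ i, v i ≤ 1 := by
      intro i
      have : u i + v i = m i := by rw [← huv]; simp
      have := hm i
      omega
    rw [hx v hv, mul_zero]

/-- A degree-one exponent is a single. -/
theorem FJaux.deg_one (d : Fin 6 →₀ ℕ) (h : d.degree = 1) : ∃ j, d = Finsupp.single j 1 := by
  obtain ⟨j, hj⟩ : d.support.Nonempty := by
    rw [Finset.nonempty_iff_ne_empty]
    intro he
    rw [Finsupp.support_eq_empty] at he
    rw [he, map_zero] at h
    exact one_ne_zero h.symm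
  have hdj : d j = 1 := by
    have h1 := Finsupp.le_degree j d
    have h2 := Finsupp.mem_support_iff.1 hj
    omega
  refine ⟨j, ?_⟩
  have hsupp : ∀ i, i ≠ j → d i = 0 := by
    intro i hij
    by_contra hi0
    have hi : i ∈ d.support := Finsupp.mem_support_iff.2 hi0
    have hsub : ({i, j} : Finset (Fin 6)) ⊆ d.support := by
      intro t ht
      simp only [Finset.mem_insert, Finset.mem_singleton] at ht
      rcases ht with rfl | rfl
      · exact hi
      · exact hj
    have h2 : 2 ≤ d.degree := by
      calc 2 ≤ d i + d j := by omega
        _ = ∑ t ∈ ({i, j} : Finset (Fin 6)), d t := (Finset.sum_pair hij).symm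
        _ ≤ ∑ t ∈ d.support, d t := Finset.sum_le_sum_of_subset hsub
        _ = d.degree := rfl
    omega
  ext i
  rcases eq_or_ne i j with rfl | hij
  · simp [hdj, Finsupp.single_apply]
  · rw [hsupp i hij, Finsupp.single_apply, if_neg (fun h => hij h.symm)]

theorem FJaux.deg_single (i : Fin 6) : (Finsupp.single i (1 : ℕ)).degree = 1 := by
  simp [Finsupp.degree_apply, Finsupp.support_single_ne_zero]

/-- Decomposition of a homogeneous degree-one polynomial. -/
theorem FJaux.homog_one_decomp (P : MvPolynomial (Fin 6) ℂ) (hP : P.IsHomogeneous 1) :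
    P = C (coeff (Finsupp.single 0 1) P) * X 0 + C (coeff (Finsupp.single 1 1) P) * X 1 +
        C (coeff (Finsupp.single 2 1) P) * X 2 + C (coeff (Finsupp.single 3 1) P) * X 3 +
        C (coeff (Finsupp.single 4 1) P) * X 4 + C (coeff (Finsupp.single 5 1) P) * X 5 := by
  apply MvPolynomial.ext
  intro m
  by_cases hd : m.degree = 1
  · obtain ⟨j, rfl⟩ := FJaux.deg_one m hd
    rw [show ((1 : ℕ)) = 1 from rfl]
    fin_cases j <;>
      simp [coeff_add, coeff_C_mul, coeff_X', Finsupp.single_eq_single_iff]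
  · rw [hP.coeff_eq_zero hd]
    have hne : ∀ i : Fin 6, ¬ (Finsupp.single i 1 = m) := by
      intro i heq
      apply hd
      rw [← heq, FJaux.deg_single]
    simp [coeff_add, coeff_C_mul, coeff_X', hne]

def FJaux.m1 : Fin 6 →₀ ℕ :=
  Finsupp.single 0 1 + Finsupp.single 1 1 + Finsupp.single 2 1 + Finsupp.single 4 1
def FJaux.m2 : Fin 6 →₀ ℕ :=
  Finsupp.single 0 1 + Finsupp.single 2 1 + Finsupp.single 3 1 + Finsupp.single 4 1
def FJaux.m3 : Fin 6 →₀ ℕ :=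
  Finsupp.single 0 1 + Finsupp.single 2 1 + Finsupp.single 4 1 + Finsupp.single 5 1

set_option maxHeartbeats 4000000 in
theorem FJaux.eq1 (ζ a0 a1 a2 a3 a4 a5 : ℂ) :
    coeff FJaux.m1 ((C a0 * X 0 + C a1 * X 1 + C a2 * X 2 + C a3 * X 3 + C a4 * X 4 + C a5 * X 5) *
      ((X 0 + C ζ * X 1) * (X 2 + C ζ * X 3) * (X 4 + C ζ * X 5))) = a1 + ζ * a0 := by
  ring_nf
  simp [FJaux.m1, FJaux.mul_Xsq, FJaux.coeff_mul_Cpow, FJaux.coeff_mul_C', coeff_mul_X', coeff_X',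
    coeff_X_pow, coeff_C_mul, Finsupp.mem_support_iff, Finsupp.add_apply, Finsupp.tsub_apply,
    Finsupp.single_apply, Finsupp.ext_iff, Fin.forall_fin_succ]
  ring

set_option maxHeartbeats 4000000 in
theorem FJaux.eq2 (ζ a0 a1 a2 a3 a4 a5 : ℂ) :
    coeff FJaux.m2 ((C a0 * X 0 + C a1 * X 1 + C a2 * X 2 + C a3 * X 3 + C a4 * X 4 + C a5 * X 5) *
      ((X 0 + C ζ * X 1) * (X 2 + C ζ * X 3) * (X 4 + C ζ * X 5))) = a3 + ζ * a2 := by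
  ring_nf
  simp [FJaux.m2, FJaux.mul_Xsq, FJaux.coeff_mul_Cpow, FJaux.coeff_mul_C', coeff_mul_X', coeff_X',
    coeff_X_pow, coeff_C_mul, Finsupp.mem_support_iff, Finsupp.add_apply, Finsupp.tsub_apply,
    Finsupp.single_apply, Finsupp.ext_iff, Fin.forall_fin_succ]
  ring

set_option maxHeartbeats 4000000 in
theorem FJaux.eq3 (ζ a0 a1 a2 a3 a4 a5 : ℂ) :
    coeff FJaux.m3 ((C a0 * X 0 + C a1 * X 1 + C a2 * X 2 + C a3 * X 3 + C a4 * X 4 + C a5 * X 5) *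
      ((X 0 + C ζ * X 1) * (X 2 + C ζ * X 3) * (X 4 + C ζ * X 5))) = a5 + ζ * a4 := by
  ring_nf
  simp [FJaux.m3, FJaux.mul_Xsq, FJaux.coeff_mul_Cpow, FJaux.coeff_mul_C', coeff_mul_X', coeff_X',
    coeff_X_pow, coeff_C_mul, Finsupp.mem_support_iff, Finsupp.add_apply, Finsupp.tsub_apply,
    Finsupp.single_apply, Finsupp.ext_iff, Fin.forall_fin_succ]
  ring

theorem FJaux.m1_sqfree : ∀ i, FJaux.m1 i ≤ 1 := by
  intro i
  fin_cases i <;> simp [FJaux.m1, Finsupp.add_apply, Finsupp.single_apply]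

theorem FJaux.m2_sqfree : ∀ i, FJaux.m2 i ≤ 1 := by
  intro i
  fin_cases i <;> simp [FJaux.m2, Finsupp.add_apply, Finsupp.single_apply]

theorem FJaux.m3_sqfree : ∀ i, FJaux.m3 i ≤ 1 := by
  intro i
  fin_cases i <;> simp [FJaux.m3, Finsupp.add_apply, Finsupp.single_apply]

/-- If `y` is the image of a linear form and `y·p_ζ = 0` and `y·p_ζ' = 0` in
`R = ℂ[x₀,…,x₅]/(x₀²,…,x₅²)`, where `ζ ≠ ζ'` and `ζ³ = ζ'³ = -1`, then `y = 0`. -/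
theorem fermat_linear_annihilating_both_planes_is_zero
    (ζ ζ' : ℂ) (hζ : ζ ^ 3 = -1) (hζ' : ζ' ^ 3 = -1) (hne : ζ ≠ ζ')
    (y : FermatJacRing) (hy : y ∈ fermatDeg 1)
    (h1 : y * fermatPlaneClass ζ = 0) (h2 : y * fermatPlaneClass ζ' = 0) :
    y = 0 := by
  obtain ⟨P, hP, hPy⟩ := hy
  rw [SetLike.mem_coe, mem_homogeneousSubmodule] at hP
  set a0 := coeff (Finsupp.single 0 1) P
  set a1 := coeff (Finsupp.single 1 1) P
  set a2 := coeff (Finsupp.single 2 1) P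
  set a3 := coeff (Finsupp.single 3 1) P
  set a4 := coeff (Finsupp.single 4 1) P
  set a5 := coeff (Finsupp.single 5 1) P
  have hdec := FJaux.homog_one_decomp P hP
  have hyP : y = fermatπ P := hPy.symm
  -- membership of the products in the ideal
  have key : ∀ c : ℂ, y * fermatPlaneClass c = 0 →
      P * ((X 0 + C c * X 1) * (X 2 + C c * X 3) * (X 4 + C c * X 5)) ∈ fermatJacIdeal := by
    intro c hc
    rw [hyP, fermatPlaneClass, fermatπ, ← map_mul] at hc
    rwa [Ideal.Quotient.mkₐ_eq_mk, Ideal.Quotient.eq_zero_iff_mem] at hc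
  have K := key ζ h1
  have K' := key ζ' h2
  -- extract the six linear equations
  have E1 : a1 + ζ * a0 = 0 := by
    have := FJaux.coeff_eq_zero_of_mem _ K FJaux.m1 FJaux.m1_sqfree
    rw [hdec, FJaux.eq1] at this
    exact this
  have E2 : a3 + ζ * a2 = 0 := by
    have := FJaux.coeff_eq_zero_of_mem _ K FJaux.m2 FJaux.m2_sqfree
    rw [hdec, FJaux.eq2] at this
    exact this
  have E3 : a5 + ζ * a4 = 0 := by
    have := FJaux.coeff_eq_zero_of_mem _ K FJaux.m3 FJaux.m3_sqfree
    rw [hdec, FJaux.eq3] at this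
    exact this
  have E1' : a1 + ζ' * a0 = 0 := by
    have := FJaux.coeff_eq_zero_of_mem _ K' FJaux.m1 FJaux.m1_sqfree
    rw [hdec, FJaux.eq1] at this
    exact this
  have E2' : a3 + ζ' * a2 = 0 := by
    have := FJaux.coeff_eq_zero_of_mem _ K' FJaux.m2 FJaux.m2_sqfree
    rw [hdec, FJaux.eq2] at this
    exact this
  have E3' : a5 + ζ' * a4 = 0 := by
    have := FJaux.coeff_eq_zero_of_mem _ K' FJaux.m3 FJaux.m3_sqfree
    rw [hdec, FJaux.eq3] at this
    exact this
  have hzz : ζ - ζ' ≠ 0 := sub_ne_zero.mpr hne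
  have ha0 : a0 = 0 := by
    have h : (ζ - ζ') * a0 = 0 := by linear_combination E1 - E1'
    rcases mul_eq_zero.1 h with h' | h'
    · exact absurd h' hzz
    · exact h'
  have ha2 : a2 = 0 := by
    have h : (ζ - ζ') * a2 = 0 := by linear_combination E2 - E2'
    rcases mul_eq_zero.1 h with h' | h'
    · exact absurd h' hzz
    · exact h'
  have ha4 : a4 = 0 := by
    have h : (ζ - ζ') * a4 = 0 := by linear_combination E3 - E3'
    rcases mul_eq_zero.1 h with h' | h'
    · exact absurd h' hzz
    · exact h'
  have ha1 : a1 = 0 := by linear_combination E1 - ζ * ha0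
  have ha3 : a3 = 0 := by linear_combination E2 - ζ * ha2
  have ha5 : a5 = 0 := by linear_combination E3 - ζ * ha4
  have hP0 : P = 0 := by
    rw [hdec, show coeff (Finsupp.single 0 1) P = 0 from ha0,
      show coeff (Finsupp.single 1 1) P = 0 from ha1,
      show coeff (Finsupp.single 2 1) P = 0 from ha2,
      show coeff (Finsupp.single 3 1) P = 0 from ha3,
      show coeff (Finsupp.single 4 1) P = 0 from ha4,
      show coeff (Finsupp.single 5 1) P = 0 from ha5]
    simp
  rw [hyP, hP0, map_zero]
end
end

section
/- Let R = ℂ[x₀,…,x₅]/(x₀²,…,x₅²), let S¹ ⊂ R denote the image of the space of homogeneous linear forms, let ζ ≠ ζ′ be complex numbers with ζ³ = ζ′³ = −1, and set p_ζ = (x₀ + ζx₁)(x₂ + ζx₃)(x₄ + ζx₅) and p_ζ′ = (x₀ + ζ′x₁)(x₂ + ζ′x₃)(x₄ + ζ′x₅) in R. Then the two subspaces S¹·p_ζ and S¹·p_ζ′ of the degree-4 component of R have trivial intersection: S¹·p_ζ ∩ S¹·p_ζ′ = {0}. -/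
open MvPolynomial

noncomputable section

/- ### Auxiliary lemmas -/

lemma fjr_fs_eq_iff (f g : Fin 6 →₀ ℕ) : f = g ↔
    (f 0 = g 0 ∧ f 1 = g 1 ∧ f 2 = g 2 ∧ f 3 = g 3 ∧ f 4 = g 4 ∧ f 5 = g 5) := by
  constructor
  · rintro rfl; simp
  · rintro ⟨h0, h1, h2, h3, h4, h5⟩
    ext a; fin_cases a <;> assumption

/-- Elements of the Jacobian ideal have vanishing coefficients at squarefree exponents. -/
lemma fjr_coeff_eq_zero {p : MvPolynomial (Fin 6) ℂ} (hp : p ∈ fermatJacIdeal)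
    (E : Fin 6 →₀ ℕ) (hE : ∀ i, E i ≤ 1) : coeff E p = 0 := by
  revert E
  refine Submodule.span_induction ?_ ?_ ?_ ?_ hp
  · rintro x ⟨i, rfl⟩ E hE
    show coeff E (X i ^ 2) = 0
    rw [X_pow_eq_monomial, coeff_monomial, if_neg]
    intro h
    have := hE i
    rw [← h, Finsupp.single_eq_same] at this
    omega
  · intro E _; simp
  · intro x y _ _ hx hy E hE
    simp [coeff_add, hx E hE, hy E hE]
  · intro r x _ hx E hE
    rw [smul_eq_mul, coeff_mul]
    refine Finset.sum_eq_zero fun uv huv => ?_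
    rw [Finset.HasAntidiagonal.mem_antidiagonal] at huv
    have h2 : ∀ i, uv.2 i ≤ 1 := fun i => by
      have : uv.1 i + uv.2 i = E i := by rw [← huv]; simp
      have := hE i; omega
    rw [hx uv.2 h2, mul_zero]

/-- A degree-1 exponent over `Fin 6` is a single. -/
lemma fjr_exists_single (d : Fin 6 →₀ ℕ) (hd : d.degree = 1) :
    ∃ i : Fin 6, d = Finsupp.single i 1 := by
  have h2 : d.degree = ∑ i : Fin 6, d i :=
    Finset.sum_subset (Finset.subset_univ _) fun x _ hx => Finsupp.notMem_support_iff.mp hx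
  rw [hd, Fin.sum_univ_six] at h2
  have hcase : d 0 = 1 ∨ d 1 = 1 ∨ d 2 = 1 ∨ d 3 = 1 ∨ d 4 = 1 ∨ d 5 = 1 := by omega
  rcases hcase with h | h | h | h | h | h
  · exact ⟨0, by ext a; fin_cases a <;> simp [Finsupp.single_apply] <;> omega⟩
  · exact ⟨1, by ext a; fin_cases a <;> simp [Finsupp.single_apply] <;> omega⟩
  · exact ⟨2, by ext a; fin_cases a <;> simp [Finsupp.single_apply] <;> omega⟩
  · exact ⟨3, by ext a; fin_cases a <;> simp [Finsupp.single_apply] <;> omega⟩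
  · exact ⟨4, by ext a; fin_cases a <;> simp [Finsupp.single_apply] <;> omega⟩
  · exact ⟨5, by ext a; fin_cases a <;> simp [Finsupp.single_apply] <;> omega⟩

/-- Decomposition of a homogeneous linear polynomial. -/
lemma fjr_lin_decomp (ℓ : MvPolynomial (Fin 6) ℂ)
    (hℓ : ℓ ∈ homogeneousSubmodule (Fin 6) ℂ 1) :
    ℓ = ∑ i, C (coeff (Finsupp.single i 1) ℓ) * X i := by
  rw [mem_homogeneousSubmodule] at hℓ
  apply MvPolynomial.ext
  intro E
  by_cases hdeg : E.degree = 1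
  · obtain ⟨i, rfl⟩ := fjr_exists_single E hdeg
    fin_cases i <;>
      simp (config := { decide := true }) only [Fin.sum_univ_six, coeff_add, coeff_C_mul,
        coeff_X', fjr_fs_eq_iff, Finsupp.single_apply, if_true, if_false, mul_one, mul_zero,
        add_zero, zero_add] <;>
      rfl
  · rw [hℓ.coeff_eq_zero hdeg]
    rw [Fin.sum_univ_six]
    simp only [coeff_add, coeff_C_mul, coeff_X']
    have : ∀ i : Fin 6, Finsupp.single i 1 ≠ E := by
      intro i h
      exact hdeg (by rw [← h]; exact Finsupp.degree_single i 1)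
    rw [if_neg (this 0), if_neg (this 1), if_neg (this 2), if_neg (this 3), if_neg (this 4),
      if_neg (this 5)]
    ring

/- ### Coefficient computations -/

section coeffs
open Finsupp

set_option maxHeartbeats 1000000

lemma fjr_coeffE1 (a : Fin 6 → ℂ) (ζ : ℂ) :
    coeff (single (0:Fin 6) 1 + single 1 1 + single 2 1 + single 4 1)
      ((∑ i, C (a i) * X i) * ((X 0 + C ζ * X 1) * (X 2 + C ζ * X 3) * (X 4 + C ζ * X 5)))
      = a 0 * ζ + a 1 := by
  simp only [Fin.sum_univ_six, X, C_apply, monomial_mul, add_mul, mul_add, coeff_add,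
    coeff_monomial]
  simp (config := {decide := true}) only [fjr_fs_eq_iff, Finsupp.add_apply, Finsupp.single_apply,
    Finsupp.coe_zero, Pi.zero_apply, if_true, if_false]
  ring

lemma fjr_coeffE2 (a : Fin 6 → ℂ) (ζ : ℂ) :
    coeff (single (0:Fin 6) 1 + single 1 1 + single 3 1 + single 4 1)
      ((∑ i, C (a i) * X i) * ((X 0 + C ζ * X 1) * (X 2 + C ζ * X 3) * (X 4 + C ζ * X 5)))
      = ζ * (a 0 * ζ + a 1) := by
  simp only [Fin.sum_univ_six, X, C_apply, monomial_mul, add_mul, mul_add, coeff_add,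
    coeff_monomial]
  simp (config := {decide := true}) only [fjr_fs_eq_iff, Finsupp.add_apply, Finsupp.single_apply,
    Finsupp.coe_zero, Pi.zero_apply, if_true, if_false]
  ring

lemma fjr_coeffE3 (a : Fin 6 → ℂ) (ζ : ℂ) :
    coeff (single (0:Fin 6) 1 + single 2 1 + single 3 1 + single 4 1)
      ((∑ i, C (a i) * X i) * ((X 0 + C ζ * X 1) * (X 2 + C ζ * X 3) * (X 4 + C ζ * X 5)))
      = a 2 * ζ + a 3 := by
  simp only [Fin.sum_univ_six, X, C_apply, monomial_mul, add_mul, mul_add, coeff_add,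
    coeff_monomial]
  simp (config := {decide := true}) only [fjr_fs_eq_iff, Finsupp.add_apply, Finsupp.single_apply,
    Finsupp.coe_zero, Pi.zero_apply, if_true, if_false]
  ring

lemma fjr_coeffE4 (a : Fin 6 → ℂ) (ζ : ℂ) :
    coeff (single (1:Fin 6) 1 + single 2 1 + single 3 1 + single 4 1)
      ((∑ i, C (a i) * X i) * ((X 0 + C ζ * X 1) * (X 2 + C ζ * X 3) * (X 4 + C ζ * X 5)))
      = ζ * (a 2 * ζ + a 3) := by
  simp only [Fin.sum_univ_six, X, C_apply, monomial_mul, add_mul, mul_add, coeff_add,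
    coeff_monomial]
  simp (config := {decide := true}) only [fjr_fs_eq_iff, Finsupp.add_apply, Finsupp.single_apply,
    Finsupp.coe_zero, Pi.zero_apply, if_true, if_false]
  ring

lemma fjr_coeffE5 (a : Fin 6 → ℂ) (ζ : ℂ) :
    coeff (single (0:Fin 6) 1 + single 2 1 + single 4 1 + single 5 1)
      ((∑ i, C (a i) * X i) * ((X 0 + C ζ * X 1) * (X 2 + C ζ * X 3) * (X 4 + C ζ * X 5)))
      = a 4 * ζ + a 5 := by
  simp only [Fin.sum_univ_six, X, C_apply, monomial_mul, add_mul, mul_add, coeff_add,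
    coeff_monomial]
  simp (config := {decide := true}) only [fjr_fs_eq_iff, Finsupp.add_apply, Finsupp.single_apply,
    Finsupp.coe_zero, Pi.zero_apply, if_true, if_false]
  ring

lemma fjr_coeffE6 (a : Fin 6 → ℂ) (ζ : ℂ) :
    coeff (single (1:Fin 6) 1 + single 2 1 + single 4 1 + single 5 1)
      ((∑ i, C (a i) * X i) * ((X 0 + C ζ * X 1) * (X 2 + C ζ * X 3) * (X 4 + C ζ * X 5)))
      = ζ * (a 4 * ζ + a 5) := by
  simp only [Fin.sum_univ_six, X, C_apply, monomial_mul, add_mul, mul_add, coeff_add,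
    coeff_monomial]
  simp (config := {decide := true}) only [fjr_fs_eq_iff, Finsupp.add_apply, Finsupp.single_apply,
    Finsupp.coe_zero, Pi.zero_apply, if_true, if_false]
  ring

end coeffs

/-- If the pair relations hold, `ℓ · p_ζ` lies in the Jacobian ideal. -/
lemma fjr_mem_of_relations (a : Fin 6 → ℂ) (ζ : ℂ)
    (h1 : a 1 = -(ζ * a 0)) (h3 : a 3 = -(ζ * a 2)) (h5 : a 5 = -(ζ * a 4)) :
    (∑ i, C (a i) * X i) * ((X 0 + C ζ * X 1) * (X 2 + C ζ * X 3) * (X 4 + C ζ * X 5))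
      ∈ fermatJacIdeal := by
  have key : (∑ i, C (a i) * X i) *
      ((X 0 + C ζ * X 1) * (X 2 + C ζ * X 3) * (X 4 + C ζ * X 5)) =
        (C (a 0) * ((X 2 + C ζ * X 3) * (X 4 + C ζ * X 5))) * X 0 ^ 2
      + (-(C (a 0) * C ζ ^ 2 * ((X 2 + C ζ * X 3) * (X 4 + C ζ * X 5)))) * X 1 ^ 2
      + (C (a 2) * ((X 0 + C ζ * X 1) * (X 4 + C ζ * X 5))) * X 2 ^ 2
      + (-(C (a 2) * C ζ ^ 2 * ((X 0 + C ζ * X 1) * (X 4 + C ζ * X 5)))) * X 3 ^ 2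
      + (C (a 4) * ((X 0 + C ζ * X 1) * (X 2 + C ζ * X 3))) * X 4 ^ 2
      + (-(C (a 4) * C ζ ^ 2 * ((X 0 + C ζ * X 1) * (X 2 + C ζ * X 3)))) * X 5 ^ 2 := by
    rw [Fin.sum_univ_six, h1, h3, h5]
    simp only [map_neg, map_mul]
    ring
  rw [key]
  have hX : ∀ i : Fin 6, (X i : MvPolynomial (Fin 6) ℂ) ^ 2 ∈ fermatJacIdeal :=
    fun i => Ideal.subset_span ⟨i, rfl⟩
  exact Ideal.add_mem _ (Ideal.add_mem _ (Ideal.add_mem _ (Ideal.add_mem _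
    (Ideal.add_mem _ (Ideal.mul_mem_left _ _ (hX 0)) (Ideal.mul_mem_left _ _ (hX 1)))
    (Ideal.mul_mem_left _ _ (hX 2))) (Ideal.mul_mem_left _ _ (hX 3)))
    (Ideal.mul_mem_left _ _ (hX 4))) (Ideal.mul_mem_left _ _ (hX 5))

/-- The subspaces `S¹·p_ζ` and `S¹·p_ζ'` of the degree-4 component of
`R = ℂ[x₀,…,x₅]/(x₀²,…,x₅²)` have trivial intersection, where `ζ ≠ ζ'`,
`ζ³ = ζ'³ = -1`, and `S¹` is the image of the space of linear forms. -/
theorem fermat_plane_classes_trivial_intersection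
    (ζ ζ' : ℂ) (hζ : ζ ^ 3 = -1) (hζ' : ζ' ^ 3 = -1) (hne : ζ ≠ ζ') :
    (fermatDeg 1).map (LinearMap.mulRight ℂ (fermatPlaneClass ζ))
      ⊓ (fermatDeg 1).map (LinearMap.mulRight ℂ (fermatPlaneClass ζ')) = ⊥ := by
  refine (Submodule.eq_bot_iff _).mpr fun v hv => ?_
  obtain ⟨hv1, hv2⟩ := Submodule.mem_inf.mp hv
  obtain ⟨y, hy, rfl⟩ := Submodule.mem_map.mp hv1
  obtain ⟨y', hy', hvv⟩ := Submodule.mem_map.mp hv2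
  obtain ⟨ℓ, hℓ, rfl⟩ := Submodule.mem_map.mp hy
  obtain ⟨m, hm, rfl⟩ := Submodule.mem_map.mp hy'
  simp only [LinearMap.mulRight_apply] at hvv ⊢
  have h1 : fermatπ.toLinearMap ℓ * fermatPlaneClass ζ
      = fermatπ (ℓ * ((X 0 + C ζ * X 1) * (X 2 + C ζ * X 3) * (X 4 + C ζ * X 5))) :=
    (map_mul fermatπ ℓ _).symm
  have h2 : fermatπ.toLinearMap m * fermatPlaneClass ζ'
      = fermatπ (m * ((X 0 + C ζ' * X 1) * (X 2 + C ζ' * X 3) * (X 4 + C ζ' * X 5))) :=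
    (map_mul fermatπ m _).symm
  have hJ : ℓ * ((X 0 + C ζ * X 1) * (X 2 + C ζ * X 3) * (X 4 + C ζ * X 5))
      - m * ((X 0 + C ζ' * X 1) * (X 2 + C ζ' * X 3) * (X 4 + C ζ' * X 5))
      ∈ fermatJacIdeal := by
    have h0 : fermatπ (ℓ * ((X 0 + C ζ * X 1) * (X 2 + C ζ * X 3) * (X 4 + C ζ * X 5))
        - m * ((X 0 + C ζ' * X 1) * (X 2 + C ζ' * X 3) * (X 4 + C ζ' * X 5))) = 0 := by
      rw [map_sub, ← h1, ← h2, ← hvv, sub_self]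
    rwa [fermatπ, Ideal.Quotient.mkₐ_eq_mk, Ideal.Quotient.eq_zero_iff_mem] at h0
  have hdℓ := fjr_lin_decomp ℓ hℓ
  have hdm := fjr_lin_decomp m hm
  have hsf1 : ∀ i : Fin 6, (Finsupp.single (0:Fin 6) 1 + Finsupp.single 1 1
      + Finsupp.single 2 1 + Finsupp.single 4 1 : Fin 6 →₀ ℕ) i ≤ 1 := by
    intro i; fin_cases i <;> simp [Finsupp.single_apply]
  have hsf2 : ∀ i : Fin 6, (Finsupp.single (0:Fin 6) 1 + Finsupp.single 1 1
      + Finsupp.single 3 1 + Finsupp.single 4 1 : Fin 6 →₀ ℕ) i ≤ 1 := by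
    intro i; fin_cases i <;> simp [Finsupp.single_apply]
  have hsf3 : ∀ i : Fin 6, (Finsupp.single (0:Fin 6) 1 + Finsupp.single 2 1
      + Finsupp.single 3 1 + Finsupp.single 4 1 : Fin 6 →₀ ℕ) i ≤ 1 := by
    intro i; fin_cases i <;> simp [Finsupp.single_apply]
  have hsf4 : ∀ i : Fin 6, (Finsupp.single (1:Fin 6) 1 + Finsupp.single 2 1
      + Finsupp.single 3 1 + Finsupp.single 4 1 : Fin 6 →₀ ℕ) i ≤ 1 := by
    intro i; fin_cases i <;> simp [Finsupp.single_apply]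
  have hsf5 : ∀ i : Fin 6, (Finsupp.single (0:Fin 6) 1 + Finsupp.single 2 1
      + Finsupp.single 4 1 + Finsupp.single 5 1 : Fin 6 →₀ ℕ) i ≤ 1 := by
    intro i; fin_cases i <;> simp [Finsupp.single_apply]
  have hsf6 : ∀ i : Fin 6, (Finsupp.single (1:Fin 6) 1 + Finsupp.single 2 1
      + Finsupp.single 4 1 + Finsupp.single 5 1 : Fin 6 →₀ ℕ) i ≤ 1 := by
    intro i; fin_cases i <;> simp [Finsupp.single_apply]
  have heq : ∀ (E : Fin 6 →₀ ℕ), (∀ i, E i ≤ 1) →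
      coeff E (ℓ * ((X 0 + C ζ * X 1) * (X 2 + C ζ * X 3) * (X 4 + C ζ * X 5)))
      = coeff E (m * ((X 0 + C ζ' * X 1) * (X 2 + C ζ' * X 3) * (X 4 + C ζ' * X 5))) := by
    intro E hE
    have := fjr_coeff_eq_zero hJ E hE
    rwa [coeff_sub, sub_eq_zero] at this
  have e1 : coeff (Finsupp.single 0 1) ℓ * ζ + coeff (Finsupp.single 1 1) ℓ
      = coeff (Finsupp.single 0 1) m * ζ' + coeff (Finsupp.single 1 1) m := by
    have h := heq _ hsf1
    conv at h => lhs; rw [hdℓ]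
    conv at h => rhs; rw [hdm]
    rw [fjr_coeffE1, fjr_coeffE1] at h
    exact h
  have e2 : ζ * (coeff (Finsupp.single 0 1) ℓ * ζ + coeff (Finsupp.single 1 1) ℓ)
      = ζ' * (coeff (Finsupp.single 0 1) m * ζ' + coeff (Finsupp.single 1 1) m) := by
    have h := heq _ hsf2
    conv at h => lhs; rw [hdℓ]
    conv at h => rhs; rw [hdm]
    rw [fjr_coeffE2, fjr_coeffE2] at h
    exact h
  have e3 : coeff (Finsupp.single 2 1) ℓ * ζ + coeff (Finsupp.single 3 1) ℓ
      = coeff (Finsupp.single 2 1) m * ζ' + coeff (Finsupp.single 3 1) m := by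
    have h := heq _ hsf3
    conv at h => lhs; rw [hdℓ]
    conv at h => rhs; rw [hdm]
    rw [fjr_coeffE3, fjr_coeffE3] at h
    exact h
  have e4 : ζ * (coeff (Finsupp.single 2 1) ℓ * ζ + coeff (Finsupp.single 3 1) ℓ)
      = ζ' * (coeff (Finsupp.single 2 1) m * ζ' + coeff (Finsupp.single 3 1) m) := by
    have h := heq _ hsf4
    conv at h => lhs; rw [hdℓ]
    conv at h => rhs; rw [hdm]
    rw [fjr_coeffE4, fjr_coeffE4] at h
    exact h
  have e5 : coeff (Finsupp.single 4 1) ℓ * ζ + coeff (Finsupp.single 5 1) ℓ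
      = coeff (Finsupp.single 4 1) m * ζ' + coeff (Finsupp.single 5 1) m := by
    have h := heq _ hsf5
    conv at h => lhs; rw [hdℓ]
    conv at h => rhs; rw [hdm]
    rw [fjr_coeffE5, fjr_coeffE5] at h
    exact h
  have e6 : ζ * (coeff (Finsupp.single 4 1) ℓ * ζ + coeff (Finsupp.single 5 1) ℓ)
      = ζ' * (coeff (Finsupp.single 4 1) m * ζ' + coeff (Finsupp.single 5 1) m) := by
    have h := heq _ hsf6
    conv at h => lhs; rw [hdℓ]
    conv at h => rhs; rw [hdm]
    rw [fjr_coeffE6, fjr_coeffE6] at h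
    exact h
  have hzz : ζ - ζ' ≠ 0 := sub_ne_zero.mpr hne
  have hA1 : coeff (Finsupp.single 1 1) ℓ = -(ζ * coeff (Finsupp.single 0 1) ℓ) := by
    have h0 : (ζ - ζ') * (coeff (Finsupp.single 0 1) ℓ * ζ + coeff (Finsupp.single 1 1) ℓ)
        = 0 := by linear_combination e2 - ζ' * e1
    have := (mul_eq_zero.mp h0).resolve_left hzz
    linear_combination this
  have hA3 : coeff (Finsupp.single 3 1) ℓ = -(ζ * coeff (Finsupp.single 2 1) ℓ) := by
    have h0 : (ζ - ζ') * (coeff (Finsupp.single 2 1) ℓ * ζ + coeff (Finsupp.single 3 1) ℓ)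
        = 0 := by linear_combination e4 - ζ' * e3
    have := (mul_eq_zero.mp h0).resolve_left hzz
    linear_combination this
  have hA5 : coeff (Finsupp.single 5 1) ℓ = -(ζ * coeff (Finsupp.single 4 1) ℓ) := by
    have h0 : (ζ - ζ') * (coeff (Finsupp.single 4 1) ℓ * ζ + coeff (Finsupp.single 5 1) ℓ)
        = 0 := by linear_combination e6 - ζ' * e5
    have := (mul_eq_zero.mp h0).resolve_left hzz
    linear_combination this
  have hmem : ℓ * ((X 0 + C ζ * X 1) * (X 2 + C ζ * X 3) * (X 4 + C ζ * X 5))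
      ∈ fermatJacIdeal := by
    have key : (∑ i, C (coeff (Finsupp.single i 1) ℓ) * X i) *
        ((X 0 + C ζ * X 1) * (X 2 + C ζ * X 3) * (X 4 + C ζ * X 5)) ∈ fermatJacIdeal :=
      fjr_mem_of_relations (fun i => coeff (Finsupp.single i 1) ℓ) ζ hA1 hA3 hA5
    rwa [← hdℓ] at key
  rw [h1, fermatπ, Ideal.Quotient.mkₐ_eq_mk, Ideal.Quotient.eq_zero_iff_mem]
  exact hmem
end
end

section
/- Let R = ℂ[x₀,…,x₅]/(x₀²,…,x₅²), let ζ ≠ ζ′ be complex numbers with ζ³ = ζ′³ = −1, and set p_ζ = (x₀ + ζx₁)(x₂ + ζx₃)(x₄ + ζx₅) and p_ζ′ = (x₀ + ζ′x₁)(x₂ + ζ′x₃)(x₄ + ζ′x₅) in R. If y ∈ R is the image of a homogeneous linear form and y·(p_ζ + p_ζ′) = 0 in R, then y = 0. -/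
open MvPolynomial

set_option maxHeartbeats 1000000

noncomputable section

lemma fermat_sq_mem (i : Fin 6) : ((X i : MvPolynomial (Fin 6) ℂ) ^ 2) ∈ fermatJacIdeal :=
  Ideal.subset_span ⟨i, rfl⟩

lemma fermat_pi_sq (i : Fin 6) : fermatπ ((X i : MvPolynomial (Fin 6) ℂ) ^ 2) = 0 := by
  rw [fermatπ, Ideal.Quotient.mkₐ_eq_mk, Ideal.Quotient.eq_zero_iff_mem]
  exact fermat_sq_mem i

lemma fermat_rel_abstract1 {A : Type*} [CommRing A]
    (z w a0 a1 b0 b1 c0 c1 u0 u1 v0 v1 t0 t1 : A)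
    (hu0 : u0 * u0 = 0) (hu1 : u1 * u1 = 0) (hv0 : v0 * v0 = 0)
    (hv1 : v1 * v1 = 0) (ht0 : t0 * t0 = 0) (ht1 : t1 * t1 = 0) :
    (a0 * u0 + a1 * u1 + b0 * v0 + b1 * v1 + c0 * t0 + c1 * t1) *
      ((u0 + z * u1) * (v0 + z * v1) * (t0 + z * t1) +
       (u0 + w * u1) * (v0 + w * v1) * (t0 + w * t1)) * (v1 * t1)
    = (2 * a1 + w * a0 + z * a0) * (u0 * u1 * v0 * v1 * t0 * t1) := by
  linear_combination
      (v1 * v1 * t1 * t1 * w * w * a0 + v1 * v1 * t1 * t1 * z * z * a0 + v1 * v1 * t0 * t1 * w * a0 + v1 * v1 * t0 * t1 * z * a0 + v0 * v1 * t1 * t1 * w * a0 + v0 * v1 * t1 * t1 * z * a0 + 2 * v0 * v1 * t0 * t1 * a0) * hu0 +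
      (v1 * v1 * t1 * t1 * w * w * w * a1 + v1 * v1 * t1 * t1 * z * z * z * a1 + v1 * v1 * t0 * t1 * w * w * a1 + v1 * v1 * t0 * t1 * z * z * a1 + v0 * v1 * t1 * t1 * w * w * a1 + v0 * v1 * t1 * t1 * z * z * a1 + v0 * v1 * t0 * t1 * w * a1 + v0 * v1 * t0 * t1 * z * a1) * hu1 +
      (u1 * v1 * t1 * t1 * w * w * b0 + u1 * v1 * t1 * t1 * z * z * b0 + u1 * v1 * t0 * t1 * w * b0 + u1 * v1 * t0 * t1 * z * b0 + u0 * v1 * t1 * t1 * w * b0 + u0 * v1 * t1 * t1 * z * b0 + 2 * u0 * v1 * t0 * t1 * b0) * hv0 +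
      (u1 * t1 * t1 * t1 * w * w * w * c1 + u1 * t1 * t1 * t1 * z * z * z * c1 + u1 * t0 * t1 * t1 * w * w * c1 + u1 * t0 * t1 * t1 * w * w * w * c0 + u1 * t0 * t1 * t1 * z * z * c1 + u1 * t0 * t1 * t1 * z * z * z * c0 + u1 * t0 * t0 * t1 * w * w * c0 + u1 * t0 * t0 * t1 * z * z * c0 + u1 * v1 * t1 * t1 * w * w * w * b1 + u1 * v1 * t1 * t1 * z * z * z * b1 + u1 * v1 * t0 * t1 * w * w * b1 + u1 * v1 * t0 * t1 * z * z * b1 + u1 * v0 * t1 * t1 * w * w * b1 + u1 * v0 * t1 * t1 * w * w * w * b0 + u1 * v0 * t1 * t1 * z * z * b1 + u1 * v0 * t1 * t1 * z * z * z * b0 + u1 * v0 * t0 * t1 * w * b1 + u1 * v0 * t0 * t1 * w * w * b0 + u1 * v0 * t0 * t1 * z * b1 + u1 * v0 * t0 * t1 * z * z * b0 + u0 * t1 * t1 * t1 * w * w * c1 + u0 * t1 * t1 * t1 * z * z * c1 + u0 * t0 * t1 * t1 * w * c1 + u0 * t0 * t1 * t1 * w * w * c0 + u0 * t0 * t1 *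 t1 * z * c1 + u0 * t0 * t1 * t1 * z * z * c0 + u0 * t0 * t0 * t1 * w * c0 + u0 * t0 * t0 * t1 * z * c0 + u0 * v1 * t1 * t1 * w * w * b1 + u0 * v1 * t1 * t1 * z * z * b1 + u0 * v1 * t0 * t1 * w * b1 + u0 * v1 * t0 * t1 * z * b1 + u0 * v0 * t1 * t1 * w * b1 + u0 * v0 * t1 * t1 * w * w * b0 + u0 * v0 * t1 * t1 * z * b1 + u0 * v0 * t1 * t1 * z * z * b0 + 2 * u0 * v0 * t0 * t1 * b1 + u0 * v0 * t0 * t1 * w * b0 + u0 * v0 * t0 * t1 * z * b0 + u0 * u1 * t1 * t1 * w * w * a1 + u0 * u1 * t1 * t1 * w * w * w * a0 + u0 * u1 * t1 * t1 * z * z * a1 + u0 * u1 * t1 * t1 * z * z * z * a0 + u0 * u1 * t0 * t1 * w * a1 + u0 * u1 * t0 * t1 * w * w * a0 + u0 * u1 * t0 * t1 * z * a1 + u0 * u1 * t0 * t1 * z * z * a0) * hv1 +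
      (u1 * v0 * v1 * t1 * w * c0 + u1 * v0 * v1 * t1 * z * c0 + 2 * u0 * v0 * v1 * t1 * c0) * ht0 +
      (u1 * v0 * v1 * t1 * w * w * c1 + u1 * v0 * v1 * t1 * z * z * c1 + u1 * v0 * v1 * t0 * w * c1 + u1 * v0 * v1 * t0 * w * w * c0 + u1 * v0 * v1 * t0 * z * c1 + u1 * v0 * v1 * t0 * z * z * c0 + u0 * v0 * v1 * t1 * w * c1 + u0 * v0 * v1 * t1 * z * c1 + 2 * u0 * v0 * v1 * t0 * c1 + u0 * v0 * v1 * t0 * w * c0 + u0 * v0 * v1 * t0 * z * c0 + u0 * u1 * v0 * v1 * w * a1 + u0 * u1 * v0 * v1 * w * w * a0 + u0 * u1 * v0 * v1 * z * a1 + u0 * u1 * v0 * v1 * z * z * a0) * ht1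

lemma fermat_rel_abstract2 {A : Type*} [CommRing A]
    (z w a0 a1 b0 b1 c0 c1 u0 u1 v0 v1 t0 t1 : A)
    (hu0 : u0 * u0 = 0) (hu1 : u1 * u1 = 0) (hv0 : v0 * v0 = 0)
    (hv1 : v1 * v1 = 0) (ht0 : t0 * t0 = 0) (ht1 : t1 * t1 = 0) :
    (a0 * u0 + a1 * u1 + b0 * v0 + b1 * v1 + c0 * t0 + c1 * t1) *
      ((u0 + z * u1) * (v0 + z * v1) * (t0 + z * t1) +
       (u0 + w * u1) * (v0 + w * v1) * (t0 + w * t1)) * (v0 * t1)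
    = (w * a1 + w * w * a0 + z * a1 + z * z * a0) * (u0 * u1 * v0 * v1 * t0 * t1) := by
  linear_combination
      (v0 * v1 * t1 * t1 * w * w * a0 + v0 * v1 * t1 * t1 * z * z * a0 + v0 * v1 * t0 * t1 * w * a0 + v0 * v1 * t0 * t1 * z * a0 + v0 * v0 * t1 * t1 * w * a0 + v0 * v0 * t1 * t1 * z * a0 + 2 * v0 * v0 * t0 * t1 * a0) * hu0 +
      (v0 * v1 * t1 * t1 * w * w * w * a1 + v0 * v1 * t1 * t1 * z * z * z * a1 + v0 * v1 * t0 * t1 * w * w * a1 + v0 * v1 * t0 * t1 * z * z * a1 + v0 * v0 * t1 * t1 * w * w * a1 + v0 * v0 * t1 * t1 * z * z * a1 + v0 * v0 * t0 * t1 * w * a1 + v0 * v0 * t0 * t1 * z * a1) * hu1 +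
      (u1 * t1 * t1 * t1 * w * w * c1 + u1 * t1 * t1 * t1 * z * z * c1 + u1 * t0 * t1 * t1 * w * c1 + u1 * t0 * t1 * t1 * w * w * c0 + u1 * t0 * t1 * t1 * z * c1 + u1 * t0 * t1 * t1 * z * z * c0 + u1 * t0 * t0 * t1 * w * c0 + u1 * t0 * t0 * t1 * z * c0 + u1 * v1 * t1 * t1 * w * w * b1 + u1 * v1 * t1 * t1 * w * w * w * b0 + u1 * v1 * t1 * t1 * z * z * b1 + u1 * v1 * t1 * t1 * z * z * z * b0 + u1 * v1 * t0 * t1 * w * b1 + u1 * v1 * t0 * t1 * w * w * b0 + u1 * v1 * t0 * t1 * z * b1 + u1 * v1 * t0 * t1 * z * z * b0 + u1 * v0 * t1 * t1 * w * w * b0 + u1 * v0 * t1 * t1 * z * z * b0 + u1 * v0 * t0 * t1 * w * b0 + u1 * v0 * t0 * t1 * z * b0 + u0 * t1 * t1 * t1 * w * c1 + u0 * t1 * t1 * t1 * z * c1 + 2 * u0 * t0 * t1 * t1 * c1 + u0 * t0 * t1 * t1 * w * c0 + u0 * t0 * t1 * t1 * z * c0 + 2 * u0 * t0 * t0 * t1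 * c0 + u0 * v1 * t1 * t1 * w * b1 + u0 * v1 * t1 * t1 * w * w * b0 + u0 * v1 * t1 * t1 * z * b1 + u0 * v1 * t1 * t1 * z * z * b0 + 2 * u0 * v1 * t0 * t1 * b1 + u0 * v1 * t0 * t1 * w * b0 + u0 * v1 * t0 * t1 * z * b0 + u0 * v0 * t1 * t1 * w * b0 + u0 * v0 * t1 * t1 * z * b0 + 2 * u0 * v0 * t0 * t1 * b0 + u0 * u1 * t1 * t1 * w * a1 + u0 * u1 * t1 * t1 * w * w * a0 + u0 * u1 * t1 * t1 * z * a1 + u0 * u1 * t1 * t1 * z * z * a0 + 2 * u0 * u1 * t0 * t1 * a1 + u0 * u1 * t0 * t1 * w * a0 + u0 * u1 * t0 * t1 * z * a0) * hv0 +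
      (u1 * v0 * t1 * t1 * w * w * w * b1 + u1 * v0 * t1 * t1 * z * z * z * b1 + u1 * v0 * t0 * t1 * w * w * b1 + u1 * v0 * t0 * t1 * z * z * b1 + u0 * v0 * t1 * t1 * w * w * b1 + u0 * v0 * t1 * t1 * z * z * b1 + u0 * v0 * t0 * t1 * w * b1 + u0 * v0 * t0 * t1 * z * b1) * hv1 +
      (u1 * v0 * v1 * t1 * w * w * c0 + u1 * v0 * v1 * t1 * z * z * c0 + u0 * v0 * v1 * t1 * w * c0 + u0 * v0 * v1 * t1 * z * c0) * ht0 +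
      (u1 * v0 * v1 * t1 * w * w * w * c1 + u1 * v0 * v1 * t1 * z * z * z * c1 + u1 * v0 * v1 * t0 * w * w * c1 + u1 * v0 * v1 * t0 * w * w * w * c0 + u1 * v0 * v1 * t0 * z * z * c1 + u1 * v0 * v1 * t0 * z * z * z * c0 + u0 * v0 * v1 * t1 * w * w * c1 + u0 * v0 * v1 * t1 * z * z * c1 + u0 * v0 * v1 * t0 * w * c1 + u0 * v0 * v1 * t0 * w * w * c0 + u0 * v0 * v1 * t0 * z * c1 + u0 * v0 * v1 * t0 * z * z * c0 + u0 * u1 * v0 * v1 * w * w * a1 + u0 * u1 * v0 * v1 * w * w * w * a0 + u0 * u1 * v0 * v1 * z * z * a1 + u0 * u1 * v0 * v1 * z * z * z * a0) * ht1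

lemma fermat_omega_ne :
    fermatπ (X 0 * X 1 * X 2 * X 3 * X 4 * X 5 : MvPolynomial (Fin 6) ℂ) ≠ 0 := by
  intro h0
  rw [fermatπ, Ideal.Quotient.mkₐ_eq_mk, Ideal.Quotient.eq_zero_iff_mem, fermatJacIdeal,
    Ideal.mem_span_range_iff_exists_fun] at h0
  obtain ⟨f, hf⟩ := h0
  set M : Fin 6 →₀ ℕ := Finsupp.single 0 1 + Finsupp.single 1 1 + Finsupp.single 2 1 +
    Finsupp.single 3 1 + Finsupp.single 4 1 + Finsupp.single 5 1 with hM
  have hMi : ∀ i : Fin 6, M i = 1 := by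
    intro i
    fin_cases i <;> simp [hM, Finsupp.single_apply]
  have h1 : coeff M (X 0 * X 1 * X 2 * X 3 * X 4 * X 5 : MvPolynomial (Fin 6) ℂ) = 1 := by
    have hmon : (X 0 * X 1 * X 2 * X 3 * X 4 * X 5 : MvPolynomial (Fin 6) ℂ) = monomial M 1 := by
      rw [hM]
      simp [X, monomial_mul]
    rw [hmon, coeff_monomial, if_pos rfl]
  have h2 : coeff M (∑ i, f i * (X i : MvPolynomial (Fin 6) ℂ) ^ 2) = 0 := by
    rw [MvPolynomial.coeff_sum]
    apply Finset.sum_eq_zero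
    intro i _
    have hmem : i ∈ M.support := by
      simp [Finsupp.mem_support_iff, hMi]
    have hnot : i ∉ (M - Finsupp.single i 1).support := by
      simp [Finsupp.mem_support_iff, Finsupp.tsub_apply, hMi]
    rw [pow_two, ← mul_assoc, coeff_mul_X', if_pos hmem, coeff_mul_X', if_neg hnot]
  rw [hf] at h2
  rw [h2] at h1
  exact one_ne_zero h1.symm

lemma fermat_single_of_degree_one {m : Fin 6 →₀ ℕ} (hm : m.degree = 1) :
    ∃ j, m = Finsupp.single j 1 := by
  have hm' : ∑ i ∈ m.support, m i = 1 := by rw [← hm]; rfl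
  have hcard : m.support.card = 1 := by
    have hle : m.support.card ≤ 1 := by
      calc m.support.card = ∑ _i ∈ m.support, 1 := by simp
        _ ≤ ∑ i ∈ m.support, m i :=
            Finset.sum_le_sum fun i hi => Nat.one_le_iff_ne_zero.2 (Finsupp.mem_support_iff.1 hi)
        _ = 1 := hm'
    have hne0 : m.support.card ≠ 0 := by
      intro hcc
      rw [Finset.card_eq_zero] at hcc
      rw [hcc, Finset.sum_empty] at hm'
      exact one_ne_zero hm'.symm
    omega
  obtain ⟨j, b, hb, rfl⟩ := Finsupp.card_support_eq_one'.1 hcard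
  have hb1 : b = 1 := by
    rwa [Finsupp.degree_apply, Finsupp.support_single_ne_zero _ hb, Finset.sum_singleton,
      Finsupp.single_eq_same] at hm
  exact ⟨j, by rw [hb1]⟩

lemma fermat_g_dec {g : MvPolynomial (Fin 6) ℂ} (hg : g.IsHomogeneous 1) :
    g = C (coeff (Finsupp.single 0 1) g) * X 0 + C (coeff (Finsupp.single 1 1) g) * X 1
      + C (coeff (Finsupp.single 2 1) g) * X 2 + C (coeff (Finsupp.single 3 1) g) * X 3
      + C (coeff (Finsupp.single 4 1) g) * X 4 + C (coeff (Finsupp.single 5 1) g) * X 5 := by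
  apply MvPolynomial.ext
  intro m
  by_cases hm : m.degree = 1
  · obtain ⟨j, rfl⟩ := fermat_single_of_degree_one hm
    simp only [coeff_add, coeff_C_mul, coeff_X']
    fin_cases j <;>
      simp [Finsupp.single_eq_single_iff]
  · have h0 : coeff m g = 0 := hg.coeff_eq_zero hm
    have hne : ∀ i : Fin 6, Finsupp.single i 1 ≠ m := by
      intro i he
      apply hm
      rw [← he, Finsupp.degree_apply, Finsupp.support_single_ne_zero _ one_ne_zero,
        Finset.sum_singleton, Finsupp.single_eq_same]
    simp [coeff_add, coeff_C_mul, coeff_X', h0, hne]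

lemma fermat_scalar_eq_zero {e : ℂ}
    (h : algebraMap ℂ FermatJacRing e *
      (fermatπ (X 0) * fermatπ (X 1) * fermatπ (X 2) * fermatπ (X 3) * fermatπ (X 4) *
        fermatπ (X 5)) = 0) :
    e = 0 := by
  by_cases he : e = 0
  · exact he
  · exfalso
    apply fermat_omega_ne
    rw [← Algebra.smul_def] at h
    have h2 := congrArg (fun t => e⁻¹ • t) h
    simp only [smul_smul, inv_mul_cancel₀ he, one_smul, smul_zero] at h2
    rw [map_mul, map_mul, map_mul, map_mul, map_mul]
    exact h2

/-- If `y` is the image of a linear form and `y·(p_ζ + p_ζ') = 0` in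
`R = ℂ[x₀,…,x₅]/(x₀²,…,x₅²)`, where `ζ ≠ ζ'` and `ζ³ = ζ'³ = -1`, then `y = 0`. -/
theorem fermat_linear_annihilating_sum_is_zero
    (ζ ζ' : ℂ) (hζ : ζ ^ 3 = -1) (hζ' : ζ' ^ 3 = -1) (hne : ζ ≠ ζ')
    (y : FermatJacRing) (hy : y ∈ fermatDeg 1)
    (h : y * (fermatPlaneClass ζ + fermatPlaneClass ζ') = 0) :
    y = 0 := by
  obtain ⟨g, hg, hgy⟩ := hy
  have hg' : g.IsHomogeneous 1 := hg
  have hgy' : fermatπ g = y := hgy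
  have hdec := fermat_g_dec hg'
  set a0 := coeff (Finsupp.single 0 1) g with ha0
  set a1 := coeff (Finsupp.single 1 1) g with ha1
  set a2 := coeff (Finsupp.single 2 1) g with ha2
  set a3 := coeff (Finsupp.single 3 1) g with ha3
  set a4 := coeff (Finsupp.single 4 1) g with ha4
  set a5 := coeff (Finsupp.single 5 1) g with ha5
  have hsq : ∀ i : Fin 6, fermatπ (X i) * fermatπ (X i) = 0 := fun i => by
    rw [← map_mul, ← pow_two]
    exact fermat_pi_sq i
  have hy2 : y = algebraMap ℂ FermatJacRing a0 * fermatπ (X 0) +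
      algebraMap ℂ FermatJacRing a1 * fermatπ (X 1) +
      algebraMap ℂ FermatJacRing a2 * fermatπ (X 2) +
      algebraMap ℂ FermatJacRing a3 * fermatπ (X 3) +
      algebraMap ℂ FermatJacRing a4 * fermatπ (X 4) +
      algebraMap ℂ FermatJacRing a5 * fermatπ (X 5) := by
    rw [← hgy', hdec]
    simp only [map_add, map_mul, ← MvPolynomial.algebraMap_eq, AlgHom.commutes]
  have hpc : ∀ c : ℂ, fermatPlaneClass c =
      (fermatπ (X 0) + algebraMap ℂ FermatJacRing c * fermatπ (X 1)) *
      (fermatπ (X 2) + algebraMap ℂ FermatJacRing c * fermatπ (X 3)) *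
      (fermatπ (X 4) + algebraMap ℂ FermatJacRing c * fermatπ (X 5)) := by
    intro c
    simp only [fermatPlaneClass, map_add, map_mul, ← MvPolynomial.algebraMap_eq,
      AlgHom.commutes]
  have e35 : (2 * a1 + ζ' * a0 + ζ * a0 : ℂ) = 0 := by
    apply fermat_scalar_eq_zero
    have hkey : algebraMap ℂ FermatJacRing (2 * a1 + ζ' * a0 + ζ * a0) *
        (fermatπ (X 0) * fermatπ (X 1) * fermatπ (X 2) * fermatπ (X 3) * fermatπ (X 4) *
          fermatπ (X 5))
        = y * (fermatPlaneClass ζ + fermatPlaneClass ζ') * (fermatπ (X 3) * fermatπ (X 5)) := by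
      rw [hy2, hpc ζ, hpc ζ']
      simp only [map_add, map_mul, map_ofNat]
      linear_combination (-1 : FermatJacRing) * fermat_rel_abstract1 (algebraMap ℂ FermatJacRing ζ) (algebraMap ℂ FermatJacRing ζ')
        (algebraMap ℂ FermatJacRing a0) (algebraMap ℂ FermatJacRing a1) (algebraMap ℂ FermatJacRing a2) (algebraMap ℂ FermatJacRing a3) (algebraMap ℂ FermatJacRing a4) (algebraMap ℂ FermatJacRing a5)
        (fermatπ (X 0)) (fermatπ (X 1)) (fermatπ (X 2)) (fermatπ (X 3)) (fermatπ (X 4)) (fermatπ (X 5))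
        (hsq 0) (hsq 1) (hsq 2) (hsq 3) (hsq 4) (hsq 5)
    rw [hkey, h, zero_mul]
  have e25 : (ζ' * a1 + ζ' * ζ' * a0 + ζ * a1 + ζ * ζ * a0 : ℂ) = 0 := by
    apply fermat_scalar_eq_zero
    have hkey : algebraMap ℂ FermatJacRing (ζ' * a1 + ζ' * ζ' * a0 + ζ * a1 + ζ * ζ * a0) *
        (fermatπ (X 0) * fermatπ (X 1) * fermatπ (X 2) * fermatπ (X 3) * fermatπ (X 4) *
          fermatπ (X 5))
        = y * (fermatPlaneClass ζ + fermatPlaneClass ζ') * (fermatπ (X 2) * fermatπ (X 5)) := by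
      rw [hy2, hpc ζ, hpc ζ']
      simp only [map_add, map_mul, map_ofNat]
      linear_combination (-1 : FermatJacRing) * fermat_rel_abstract2 (algebraMap ℂ FermatJacRing ζ) (algebraMap ℂ FermatJacRing ζ')
        (algebraMap ℂ FermatJacRing a0) (algebraMap ℂ FermatJacRing a1) (algebraMap ℂ FermatJacRing a2) (algebraMap ℂ FermatJacRing a3) (algebraMap ℂ FermatJacRing a4) (algebraMap ℂ FermatJacRing a5)
        (fermatπ (X 0)) (fermatπ (X 1)) (fermatπ (X 2)) (fermatπ (X 3)) (fermatπ (X 4)) (fermatπ (X 5))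
        (hsq 0) (hsq 1) (hsq 2) (hsq 3) (hsq 4) (hsq 5)
    rw [hkey, h, zero_mul]
  have e15 : (2 * a3 + ζ' * a2 + ζ * a2 : ℂ) = 0 := by
    apply fermat_scalar_eq_zero
    have hkey : algebraMap ℂ FermatJacRing (2 * a3 + ζ' * a2 + ζ * a2) *
        (fermatπ (X 0) * fermatπ (X 1) * fermatπ (X 2) * fermatπ (X 3) * fermatπ (X 4) *
          fermatπ (X 5))
        = y * (fermatPlaneClass ζ + fermatPlaneClass ζ') * (fermatπ (X 1) * fermatπ (X 5)) := by
      rw [hy2, hpc ζ, hpc ζ']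
      simp only [map_add, map_mul, map_ofNat]
      linear_combination (-1 : FermatJacRing) * fermat_rel_abstract1 (algebraMap ℂ FermatJacRing ζ) (algebraMap ℂ FermatJacRing ζ')
        (algebraMap ℂ FermatJacRing a2) (algebraMap ℂ FermatJacRing a3) (algebraMap ℂ FermatJacRing a0) (algebraMap ℂ FermatJacRing a1) (algebraMap ℂ FermatJacRing a4) (algebraMap ℂ FermatJacRing a5)
        (fermatπ (X 2)) (fermatπ (X 3)) (fermatπ (X 0)) (fermatπ (X 1)) (fermatπ (X 4)) (fermatπ (X 5))
        (hsq 2) (hsq 3) (hsq 0) (hsq 1) (hsq 4) (hsq 5)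
    rw [hkey, h, zero_mul]
  have e05 : (ζ' * a3 + ζ' * ζ' * a2 + ζ * a3 + ζ * ζ * a2 : ℂ) = 0 := by
    apply fermat_scalar_eq_zero
    have hkey : algebraMap ℂ FermatJacRing (ζ' * a3 + ζ' * ζ' * a2 + ζ * a3 + ζ * ζ * a2) *
        (fermatπ (X 0) * fermatπ (X 1) * fermatπ (X 2) * fermatπ (X 3) * fermatπ (X 4) *
          fermatπ (X 5))
        = y * (fermatPlaneClass ζ + fermatPlaneClass ζ') * (fermatπ (X 0) * fermatπ (X 5)) := by
      rw [hy2, hpc ζ, hpc ζ']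
      simp only [map_add, map_mul, map_ofNat]
      linear_combination (-1 : FermatJacRing) * fermat_rel_abstract2 (algebraMap ℂ FermatJacRing ζ) (algebraMap ℂ FermatJacRing ζ')
        (algebraMap ℂ FermatJacRing a2) (algebraMap ℂ FermatJacRing a3) (algebraMap ℂ FermatJacRing a0) (algebraMap ℂ FermatJacRing a1) (algebraMap ℂ FermatJacRing a4) (algebraMap ℂ FermatJacRing a5)
        (fermatπ (X 2)) (fermatπ (X 3)) (fermatπ (X 0)) (fermatπ (X 1)) (fermatπ (X 4)) (fermatπ (X 5))
        (hsq 2) (hsq 3) (hsq 0) (hsq 1) (hsq 4) (hsq 5)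
    rw [hkey, h, zero_mul]
  have e13 : (2 * a5 + ζ' * a4 + ζ * a4 : ℂ) = 0 := by
    apply fermat_scalar_eq_zero
    have hkey : algebraMap ℂ FermatJacRing (2 * a5 + ζ' * a4 + ζ * a4) *
        (fermatπ (X 0) * fermatπ (X 1) * fermatπ (X 2) * fermatπ (X 3) * fermatπ (X 4) *
          fermatπ (X 5))
        = y * (fermatPlaneClass ζ + fermatPlaneClass ζ') * (fermatπ (X 1) * fermatπ (X 3)) := by
      rw [hy2, hpc ζ, hpc ζ']
      simp only [map_add, map_mul, map_ofNat]
      linear_combination (-1 : FermatJacRing) * fermat_rel_abstract1 (algebraMap ℂ FermatJacRing ζ) (algebraMap ℂ FermatJacRing ζ')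
        (algebraMap ℂ FermatJacRing a4) (algebraMap ℂ FermatJacRing a5) (algebraMap ℂ FermatJacRing a0) (algebraMap ℂ FermatJacRing a1) (algebraMap ℂ FermatJacRing a2) (algebraMap ℂ FermatJacRing a3)
        (fermatπ (X 4)) (fermatπ (X 5)) (fermatπ (X 0)) (fermatπ (X 1)) (fermatπ (X 2)) (fermatπ (X 3))
        (hsq 4) (hsq 5) (hsq 0) (hsq 1) (hsq 2) (hsq 3)
    rw [hkey, h, zero_mul]
  have e03 : (ζ' * a5 + ζ' * ζ' * a4 + ζ * a5 + ζ * ζ * a4 : ℂ) = 0 := by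
    apply fermat_scalar_eq_zero
    have hkey : algebraMap ℂ FermatJacRing (ζ' * a5 + ζ' * ζ' * a4 + ζ * a5 + ζ * ζ * a4) *
        (fermatπ (X 0) * fermatπ (X 1) * fermatπ (X 2) * fermatπ (X 3) * fermatπ (X 4) *
          fermatπ (X 5))
        = y * (fermatPlaneClass ζ + fermatPlaneClass ζ') * (fermatπ (X 0) * fermatπ (X 3)) := by
      rw [hy2, hpc ζ, hpc ζ']
      simp only [map_add, map_mul, map_ofNat]
      linear_combination (-1 : FermatJacRing) * fermat_rel_abstract2 (algebraMap ℂ FermatJacRing ζ) (algebraMap ℂ FermatJacRing ζ')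
        (algebraMap ℂ FermatJacRing a4) (algebraMap ℂ FermatJacRing a5) (algebraMap ℂ FermatJacRing a0) (algebraMap ℂ FermatJacRing a1) (algebraMap ℂ FermatJacRing a2) (algebraMap ℂ FermatJacRing a3)
        (fermatπ (X 4)) (fermatπ (X 5)) (fermatπ (X 0)) (fermatπ (X 1)) (fermatπ (X 2)) (fermatπ (X 3))
        (hsq 4) (hsq 5) (hsq 0) (hsq 1) (hsq 2) (hsq 3)
    rw [hkey, h, zero_mul]
  have hd : (ζ - ζ') ≠ 0 := sub_ne_zero.2 hne
  have hsqd : ((ζ - ζ') ^ 2 : ℂ) ≠ 0 := pow_ne_zero 2 hd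
  have hz0 : a0 = 0 := by
    have hq : ((ζ - ζ') ^ 2 : ℂ) * a0 = 0 := by
      linear_combination (-(ζ + ζ')) * e35 + 2 * e25
    rcases mul_eq_zero.1 hq with hh | hh
    · exact absurd hh hsqd
    · exact hh
  have hz1 : a1 = 0 := by linear_combination e35 / 2 - (ζ' + ζ) / 2 * hz0
  have hz2 : a2 = 0 := by
    have hq : ((ζ - ζ') ^ 2 : ℂ) * a2 = 0 := by
      linear_combination (-(ζ + ζ')) * e15 + 2 * e05
    rcases mul_eq_zero.1 hq with hh | hh
    · exact absurd hh hsqd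
    · exact hh
  have hz3 : a3 = 0 := by linear_combination e15 / 2 - (ζ' + ζ) / 2 * hz2
  have hz4 : a4 = 0 := by
    have hq : ((ζ - ζ') ^ 2 : ℂ) * a4 = 0 := by
      linear_combination (-(ζ + ζ')) * e13 + 2 * e03
    rcases mul_eq_zero.1 hq with hh | hh
    · exact absurd hh hsqd
    · exact hh
  have hz5 : a5 = 0 := by linear_combination e13 / 2 - (ζ' + ζ) / 2 * hz4
  rw [← hgy', hdec, hz0, hz1, hz2, hz3, hz4, hz5]
  simp
end
end

section
/- Let W ⊂ ℂ[x₀,…,x₅] be the 56-dimensional vector space of homogeneous cubic forms in six variables, and let S ⊂ ℂ⁶ be the affine cone over a rational normal cubic cone, namely the image of the map ℂ⁴ → ℂ⁶, (λ, μ, s, t) ↦ (λ, μs³, μs²t, μst², μt³, 0). Then the subspace of cubics F ∈ W vanishing identically on S has dimension 34, i.e. codimension 22 in W. -/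
open MvPolynomial

noncomputable section

/-- The affine cone in `ℂ⁶` over a rational normal cubic cone: the image of the
map `ℂ⁴ → ℂ⁶`, `(λ, μ, s, t) ↦ (λ, μs³, μs²t, μst², μt³, 0)`. -/
def twistedCubicCone : Set (Fin 6 → ℂ) :=
  {v | ∃ l m s t : ℂ, v = ![l, m * s ^ 3, m * s ^ 2 * t, m * s * t ^ 2, m * t ^ 3, 0]}

namespace TCCaux

/-- substitution tuple -/
def fsub : Fin 6 → MvPolynomial (Fin 4) ℂ :=
  ![X 0, X 1 * X 2 ^ 3, X 1 * X 2 ^ 2 * X 3, X 1 * X 2 * X 3 ^ 2, X 1 * X 3 ^ 3, 0]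

def Psi : MvPolynomial (Fin 6) ℂ →ₐ[ℂ] MvPolynomial (Fin 4) ℂ := aeval fsub

def eh (d : Fin 6 → ℕ) : Fin 4 → ℕ :=
  ![d 0, d 1 + d 2 + d 3 + d 4, 3 * d 1 + 2 * d 2 + d 3, d 2 + 2 * d 3 + 3 * d 4]

def E0 : Finset (Fin 4 → ℕ) :=
  ((Finset.Nat.antidiagonalTuple 6 3).filter fun d => d 5 = 0).image eh

def E : Finset (Fin 4 →₀ ℕ) := E0.image Finsupp.equivFunOnFinite.symm

lemma card_E : E.card = 22 := by
  rw [E, Finset.card_image_of_injective _ (Equiv.injective _)]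
  decide

lemma degree_eq_sum (d : Fin 6 →₀ ℕ) : d.degree = ∑ i, d i := by
  rw [Finsupp.degree]
  exact Finset.sum_subset (Finset.subset_univ _)
    (fun i _ h => Finsupp.notMem_support_iff.1 h)

lemma Psi_monomial (d : Fin 6 →₀ ℕ) (h5 : d 5 = 0) :
    Psi (monomial d 1) = monomial (Finsupp.equivFunOnFinite.symm (eh ⇑d)) 1 := by
  rw [Psi, aeval_monomial, map_one, one_mul,
    Finsupp.prod_fintype _ _ (fun i => pow_zero _),
    monomial_eq, map_one, one_mul,
    Finsupp.prod_fintype _ _ (fun i => pow_zero _)]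
  simp only [Fin.prod_univ_six, Fin.prod_univ_four, Finsupp.coe_equivFunOnFinite_symm,
    eh, fsub, Matrix.cons_val_zero, Matrix.cons_val_one, Matrix.head_cons,
    Matrix.cons_val_two, Matrix.tail_cons, Matrix.cons_val_three, Matrix.cons_val_four,
    Matrix.cons_val_succ, h5, pow_zero, mul_one]
  ring

lemma Psi_monomial_zero (d : Fin 6 →₀ ℕ) (h5 : d 5 ≠ 0) :
    Psi (monomial d 1) = 0 := by
  rw [Psi, aeval_monomial, map_one, one_mul,
    Finsupp.prod_fintype _ _ (fun i => pow_zero _)]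
  apply Finset.prod_eq_zero (Finset.mem_univ (5 : Fin 6))
  have h : fsub 5 = 0 := rfl
  rw [h]
  exact zero_pow h5

lemma mem_E_of (d : Fin 6 →₀ ℕ) (hdeg : d.degree = 3) (h5 : d 5 = 0) :
    Finsupp.equivFunOnFinite.symm (eh ⇑d) ∈ E := by
  rw [E, Finset.mem_image]
  refine ⟨eh ⇑d, ?_, rfl⟩
  rw [E0, Finset.mem_image]
  refine ⟨⇑d, ?_, rfl⟩
  rw [Finset.mem_filter, Finset.Nat.mem_antidiagonalTuple]
  exact ⟨by rw [← degree_eq_sum]; exact hdeg, h5⟩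

lemma support_Psi_subset {p : MvPolynomial (Fin 6) ℂ}
    (hp : p ∈ homogeneousSubmodule (Fin 6) ℂ 3) :
    (Psi p).support ⊆ E := by
  intro u hu
  rw [mem_support_iff] at hu
  -- write p as a sum of monomials
  have hps : Psi p = ∑ d ∈ p.support, (coeff d p) • Psi (monomial d 1) := by
    conv_lhs => rw [p.as_sum]
    rw [map_sum]
    refine Finset.sum_congr rfl fun d _ => ?_
    rw [← map_smul]
    congr 1
    rw [smul_monomial, smul_eq_mul, mul_one]
  rw [hps] at hu
  have : ∃ d ∈ p.support, coeff u ((coeff d p) • Psi (monomial d 1)) ≠ 0 := by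
    by_contra h
    push_neg at h
    apply hu
    rw [coeff_sum]
    exact Finset.sum_eq_zero h
  obtain ⟨d, hdmem, hdne⟩ := this
  by_cases h5 : d 5 = 0
  · rw [Psi_monomial d h5] at hdne
    have : u = Finsupp.equivFunOnFinite.symm (eh ⇑d) := by
      by_contra hne
      apply hdne
      rw [coeff_smul, coeff_monomial, if_neg (fun h => hne h.symm), smul_zero]
    rw [this]
    exact mem_E_of d (by
      have := hp (mem_support_iff.1 hdmem)
      rwa [Finsupp.degree_eq_weight_one]) h5
  · rw [Psi_monomial_zero d h5] at hdne
    simp at hdne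

lemma aeval_fsub_eq (x : Fin 4 → ℂ) :
    (fun i => aeval (R := ℂ) x (fsub i)) =
      ![x 0, x 1 * x 2 ^ 3, x 1 * x 2 ^ 2 * x 3, x 1 * x 2 * x 3 ^ 2, x 1 * x 3 ^ 3, 0] := by
  funext i
  fin_cases i <;> first | (simp [fsub]; done) | exact map_zero (aeval x)

lemma vanish_iff (p : MvPolynomial (Fin 6) ℂ) :
    (∀ v ∈ twistedCubicCone, aeval (R := ℂ) v p = 0) ↔ Psi p = 0 := by
  constructor
  · intro h
    apply MvPolynomial.funext (q := 0)
    intro x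
    rw [map_zero]
    rw [← RingHom.congr_fun (coe_aeval_eq_eval (f := x)) (Psi p)]
    show aeval (R := ℂ) x (aeval fsub p) = 0
    rw [comp_aeval_apply, aeval_fsub_eq]
    exact h _ ⟨x 0, x 1, x 2, x 3, rfl⟩
  · intro h v hv
    obtain ⟨l, m, s, t, rfl⟩ := hv
    have : (![l, m * s ^ 3, m * s ^ 2 * t, m * s * t ^ 2, m * t ^ 3, 0] : Fin 6 → ℂ) =
        fun i => aeval (R := ℂ) ![l, m, s, t] (fsub i) := by
      rw [aeval_fsub_eq]
      simp
    rw [this, ← comp_aeval_apply]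
    show aeval (R := ℂ) ![l, m, s, t] (Psi p) = 0
    rw [h, map_zero]

/-- The coefficient-extraction linear map on homogeneous cubics. -/
def Lmap : ↥(homogeneousSubmodule (Fin 6) ℂ 3) →ₗ[ℂ] (↥E → ℂ) :=
  (LinearMap.pi fun e : ↥E => lcoeff ℂ (e : Fin 4 →₀ ℕ)) ∘ₗ Psi.toLinearMap ∘ₗ
    (homogeneousSubmodule (Fin 6) ℂ 3).subtype

lemma Lmap_apply (p : ↥(homogeneousSubmodule (Fin 6) ℂ 3)) (e : ↥E) :
    Lmap p e = coeff (e : Fin 4 →₀ ℕ) (Psi p.1) := rfl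

lemma Lmap_eq_zero_iff (p : ↥(homogeneousSubmodule (Fin 6) ℂ 3)) :
    Lmap p = 0 ↔ Psi p.1 = 0 := by
  constructor
  · intro h
    by_contra hne
    obtain ⟨u, hu⟩ := ne_zero_iff.1 hne
    have huE : u ∈ E := support_Psi_subset p.2 (mem_support_iff.2 hu)
    exact hu (by rw [← Lmap_apply p ⟨u, huE⟩, h]; rfl)
  · intro h
    funext e
    rw [Lmap_apply, h, coeff_zero]
    rfl

lemma single_mem_range (e : ↥E) : Pi.single e (1 : ℂ) ∈ LinearMap.range Lmap := by
  obtain ⟨g, hg, hge⟩ := Finset.mem_image.1 e.2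
  obtain ⟨d, hd, hdg⟩ := Finset.mem_image.1 hg
  rw [Finset.mem_filter, Finset.Nat.mem_antidiagonalTuple] at hd
  set D : Fin 6 →₀ ℕ := Finsupp.equivFunOnFinite.symm d with hD
  have hDc : ⇑D = d := rfl
  have hdeg : D.degree = 3 := by rw [degree_eq_sum]; simp only [hDc]; exact hd.1
  have hmem : monomial D (1 : ℂ) ∈ homogeneousSubmodule (Fin 6) ℂ 3 := by
    rw [mem_homogeneousSubmodule]
    exact isHomogeneous_monomial _ hdeg
  refine ⟨⟨monomial D 1, hmem⟩, ?_⟩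
  funext e'
  have hPsi : Psi (monomial D 1) = monomial (e : Fin 4 →₀ ℕ) 1 := by
    rw [Psi_monomial D (by rw [hDc]; exact hd.2), hDc, hdg, hge]
  rw [Lmap_apply, hPsi, coeff_monomial, Pi.single_apply]
  by_cases hee : e' = e
  · rw [if_pos hee, if_pos (by rw [hee])]
  · rw [if_neg hee, if_neg (fun hx => hee (Subtype.ext hx.symm))]

lemma Lmap_surjective : Function.Surjective Lmap := by
  intro g
  have : g ∈ LinearMap.range Lmap := by
    have hg : g = ∑ e : ↥E, g e • (Pi.single e 1 : ↥E → ℂ) := by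
      funext e'
      rw [Finset.sum_apply]
      simp [Pi.single_apply]
    rw [hg]
    exact Submodule.sum_mem _ fun e _ => Submodule.smul_mem _ _ (single_mem_range e)
  exact this

/-- the set of exponents of degree-3 monomials matches the antidiagonal tuples -/
def degSetEquiv : {d : Fin 6 →₀ ℕ // d ∈ {d : Fin 6 →₀ ℕ | d.degree = 3}} ≃
    {x : Fin 6 → ℕ // x ∈ Finset.Nat.antidiagonalTuple 6 3} :=
  Finsupp.equivFunOnFinite.subtypeEquiv fun d => by
    rw [Set.mem_setOf_eq, Finset.Nat.mem_antidiagonalTuple, degree_eq_sum]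
    rfl

instance : Fintype {d : Fin 6 →₀ ℕ // d ∈ {d : Fin 6 →₀ ℕ | d.degree = 3}} :=
  Fintype.ofEquiv _ degSetEquiv.symm

/-- homogeneous cubics are linearly equivalent to functions on the exponent set -/
def VEquiv : ↥(homogeneousSubmodule (Fin 6) ℂ 3) ≃ₗ[ℂ]
    ({d : Fin 6 →₀ ℕ // d ∈ {d : Fin 6 →₀ ℕ | d.degree = 3}} → ℂ) :=
  ((LinearEquiv.ofEq _ _ (homogeneousSubmodule_eq_finsupp_supported (Fin 6) ℂ 3)).trans
    (AddMonoidAlgebra.supportedEquivFinsupp _)).trans (Finsupp.linearEquivFunOnFinite ℂ ℂ _)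

instance : FiniteDimensional ℂ ↥(homogeneousSubmodule (Fin 6) ℂ 3) :=
  LinearEquiv.finiteDimensional VEquiv.symm

lemma finrank_V : Module.finrank ℂ ↥(homogeneousSubmodule (Fin 6) ℂ 3) = 56 := by
  rw [VEquiv.finrank_eq, Module.finrank_fintype_fun_eq_card, Fintype.card_congr degSetEquiv,
    Fintype.card_coe]
  decide

end TCCaux

set_option maxHeartbeats 1000000 in
set_option synthInstance.maxHeartbeats 400000 in
open TCCaux in
/-- The space `W` of homogeneous cubic forms in six variables is 56-dimensional,
and the subspace of cubics vanishing identically on the cone `S` over a rational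
normal cubic cone has dimension 34, i.e. codimension 22 in `W`. -/
theorem cubics_vanishing_on_twisted_cubic_cone :
    Module.finrank ℂ ↥(homogeneousSubmodule (Fin 6) ℂ 3) = 56 ∧
    Module.finrank ℂ
      ↥(homogeneousSubmodule (Fin 6) ℂ 3 ⊓
        ⨅ v ∈ twistedCubicCone, LinearMap.ker (aeval (R := ℂ) v).toLinearMap) = 34 := by
  refine ⟨finrank_V, ?_⟩
  set I : Submodule ℂ (MvPolynomial (Fin 6) ℂ) :=
    ⨅ v ∈ twistedCubicCone, LinearMap.ker (aeval (R := ℂ) v).toLinearMap with hI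
  have hker : LinearMap.ker Lmap =
      Submodule.comap (homogeneousSubmodule (Fin 6) ℂ 3).subtype
        (homogeneousSubmodule (Fin 6) ℂ 3 ⊓ I) := by
    ext p
    simp only [LinearMap.mem_ker, Submodule.mem_comap, Submodule.mem_inf,
      Submodule.coe_subtype, hI, Submodule.mem_iInf, LinearMap.mem_ker,
      AlgHom.toLinearMap_apply]
    constructor
    · intro h
      exact ⟨p.2, fun v hv => (vanish_iff p.1).2 ((Lmap_eq_zero_iff p).1 h) v hv⟩
    · intro h
      exact (Lmap_eq_zero_iff p).2 ((vanish_iff p.1).1 fun v hv => h.2 v hv)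
  have e2 := Submodule.comapSubtypeEquivOfLe
    (inf_le_left : homogeneousSubmodule (Fin 6) ℂ 3 ⊓ I ≤ homogeneousSubmodule (Fin 6) ℂ 3)
  have hrank := LinearMap.finrank_range_add_finrank_ker Lmap
  have hrange : LinearMap.range Lmap = ⊤ := LinearMap.range_eq_top.2 Lmap_surjective
  rw [hrange, finrank_top, Module.finrank_fintype_fun_eq_card, Fintype.card_coe, card_E,
    finrank_V, hker] at hrank
  rw [LinearEquiv.finrank_eq e2] at hrank
  omega
end
end
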